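/- Let G=(V,E) be a complete p-partite multigraph with p≥2, and suppose that p≥3 or V₁≠∅. Then every V₂-favorable admissible matching policy Φ is maximal: stab(G,Φ) = Ncond(G). -/

import Mathlib

open scoped BigOperators

attribute [local instance] Classical.propDecidable

/-- A multigraph on the vertex set `V`: a symmetric binary relation on `V`,
possibly with self-loops. -/
structure Multigraph (V : Type*) where
  Adj : V → V → Prop
  symm : ∀ u v, Adj u v → Adj v u

namespace Multigraph

variable {V : Type*}

/-- The neighborhood `E(U)` of a set `U` of vertices. -/
def nbhd (G : Multigraph V) (U : Set V) : Set V :=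
  {v | ∃ u ∈ U, G.Adj u v}

/-- `V₁`, the set of self-looped vertices. -/
def loopSet (G : Multigraph V) : Set V := {v | G.Adj v v}

/-- `V₂`, the set of non-self-looped vertices. -/
def nonloopSet (G : Multigraph V) : Set V := {v | ¬ G.Adj v v}

/-- The maximal subgraph `Ǧ`, obtained by deleting all self-loops. -/
def check (G : Multigraph V) : Multigraph V where
  Adj u v := G.Adj u v ∧ u ≠ v
  symm u v h := ⟨G.symm u v h.1, h.2.symm⟩

/-- An independent set: a nonempty set of pairwise non-adjacent vertices. -/
def IsIndep (G : Multigraph V) (I : Set V) : Prop :=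
  I.Nonempty ∧ ∀ i ∈ I, ∀ j ∈ I, ¬ G.Adj i j

/-- Connectivity of a multigraph: any two nodes are joined by a path of edges. -/
def Connected (G : Multigraph V) : Prop :=
  ∀ u v : V, Relation.ReflTransGen G.Adj u v

/-- `G` is a bipartite graph: its vertex set splits into two parts such that every
edge joins the two parts (in particular, `G` has no self-loop). -/
def IsBipartiteGraph (G : Multigraph V) : Prop :=
  ∃ A B : Set V, (∀ v, v ∈ A ∨ v ∈ B) ∧ (∀ v, ¬(v ∈ A ∧ v ∈ B)) ∧
    ∀ u v, G.Adj u v → (u ∈ A ∧ v ∈ B) ∨ (u ∈ B ∧ v ∈ A)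

section Meas

variable [Fintype V]

/-- Total mass `μ(S)` of a set of vertices. -/
noncomputable def mass (μ : V → ℝ) (S : Set V) : ℝ := ∑ v, S.indicator μ v

/-- `μ ∈ ℳ(V)`: a probability measure with full support on `V`. -/
def FullSupport (μ : V → ℝ) : Prop := (∀ v, 0 < μ v) ∧ ∑ v, μ v = 1

/-- The stability condition `Ncond(G)`: fully supported probability measures `μ` such
that `μ(I) < μ(E(I))` for every independent set `I` of `G`. -/
def Ncond (G : Multigraph V) (μ : V → ℝ) : Prop :=
  FullSupport μ ∧ ∀ I : Set V, G.IsIndep I → mass μ I < mass μ (G.nbhd I)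

/-- The degree of a vertex: its number of neighbors (including itself if self-looped). -/
noncomputable def deg (G : Multigraph V) (i : V) : ℕ := (G.nbhd {i}).ncard

end Meas
section Chain

variable [DecidableEq V]

/-- The state space `𝕎` of admissible queue details. -/
def WSpace (G : Multigraph V) : Set (List V) :=
  {w | (∀ i j : V, i ≠ j → G.Adj i j → w.count i = 0 ∨ w.count j = 0) ∧
    ∀ i : V, G.Adj i i → w.count i ≤ 1}

/-- An admissible matching policy: a (possibly random) transition rule which, in state
`w` upon the arrival of an item of class `v`, appends `v` when no compatible item is in
line, and otherwise deletes one stored item of a class compatible with `v`. -/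
structure Policy (G : Multigraph V) where
  next : List V → V → List V → ℝ
  nonneg : ∀ w v w', 0 ≤ next w v w'
  total : ∀ w ∈ WSpace G, ∀ v : V, (∑' w' : List V, next w v w') = 1
  noMatch : ∀ w ∈ WSpace G, ∀ v : V, (∀ a ∈ w, ¬ G.Adj a v) → next w v (w ++ [v]) = 1
  matchRule : ∀ w ∈ WSpace G, ∀ v : V, (∃ a ∈ w, G.Adj a v) → ∀ w' : List V,
    next w v w' ≠ 0 → ∃ k : Fin w.length, G.Adj (w.get k) v ∧ w' = w.eraseIdx k

/-- The transition kernel of the buffer-content Markov chain of the model `(G,Φ,μ)`. -/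
noncomputable def kernel [Fintype V] (G : Multigraph V) (pol : Policy G) (μ : V → ℝ)
    (w w' : List V) : ℝ :=
  ∑ v : V, μ v * pol.next w v w'

/-- Irreducibility (on the state space `𝕎`) of a transition kernel. -/
def Irreducible (G : Multigraph V) (P : List V → List V → ℝ) : Prop :=
  ∀ w ∈ WSpace G, ∀ w' ∈ WSpace G, Relation.ReflTransGen (fun a b => 0 < P a b) w w'

/-- A stationary probability distribution, supported on `𝕎`, for a transition kernel. -/
def IsStationary (G : Multigraph V) (P : List V → List V → ℝ) (π : List V → ℝ) :
    Prop :=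
  (∀ w, 0 ≤ π w) ∧ (∀ w ∉ WSpace G, π w = 0) ∧ (∑' w : List V, π w) = 1 ∧
    ∀ w' : List V, (∑' w : List V, π w * P w w') = π w'

/-- Positive recurrence of the chain: irreducibility together with the existence of a
stationary probability distribution. -/
def PositiveRecurrent (G : Multigraph V) (P : List V → List V → ℝ) : Prop :=
  Irreducible G P ∧ ∃ π : List V → ℝ, IsStationary G P π

end Chain
section V2Fav

variable [DecidableEq V]

/-- A `V₂`-favorable policy: the incoming item always prioritizes a match with a
compatible non-self-looped class over a self-looped one, whenever it has the choice. -/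
def V2Favorable (G : Multigraph V) (pol : Policy G) : Prop :=
  ∀ w ∈ WSpace G, ∀ v : V, (∃ a ∈ w, G.Adj a v ∧ ¬ G.Adj a a) →
    ∀ w' : List V, pol.next w v w' ≠ 0 →
      ∃ k : Fin w.length, G.Adj (w.get k) v ∧ ¬ G.Adj (w.get k) (w.get k) ∧
        w' = w.eraseIdx k

end V2Fav
/-- `G` is a complete `p`-partite multigraph: its maximal subgraph `Ǧ` is complete
`p`-partite, i.e. the vertex set partitions into `p` (maximal independent) parts, two
nodes being `Ǧ`-adjacent iff they lie in distinct parts. -/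
def CompletePPartite (G : Multigraph V) (p : ℕ) : Prop :=
  ∃ f : V → Fin p, Function.Surjective f ∧ ∀ u v : V, (check G).Adj u v ↔ f u ≠ f v
end Multigraph

open Multigraph

namespace MGAux

variable {V : Type*} [Fintype V] [DecidableEq V]

set_option linter.unusedSectionVars false

attribute [local instance] Classical.propDecidable

/-- number of letters of `w` satisfying `q`. -/
noncomputable def cnt (q : V → Prop) (w : List V) : ℕ :=
  (w.filter fun a => decide (q a)).length

lemma cnt_nil (q : V → Prop) : cnt q ([] : List V) = 0 := rfl

lemma cnt_cons (q : V → Prop) (a : V) (w : List V) :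
    cnt q (a :: w) = (if q a then 1 else 0) + cnt q w := by
  by_cases h : q a <;> simp [cnt, List.filter_cons, h] <;> omega

lemma cnt_append (q : V → Prop) (w : List V) (v : V) :
    cnt q (w ++ [v]) = cnt q w + (if q v then 1 else 0) := by
  by_cases h : q v <;> simp [cnt, List.filter_append, h]

lemma cnt_eraseIdx (q : V → Prop) : ∀ (w : List V) (i : Fin w.length),
    cnt q (w.eraseIdx i) + (if q (w.get i) then 1 else 0) = cnt q w := by
  intro w
  induction w with
  | nil => intro i; exact absurd i.2 (by simp)
  | cons a t ih =>
    intro i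
    rcases i with ⟨iv, hiv⟩
    cases iv with
    | zero => simp [cnt_cons, List.eraseIdx]; omega
    | succ n =>
      have hn : n < t.length := by simpa using hiv
      have := ih ⟨n, hn⟩
      simp only [List.eraseIdx, cnt_cons, List.get] at *
      omega
      
lemma cnt_pos_iff (q : V → Prop) (w : List V) :
    0 < cnt q w ↔ ∃ a ∈ w, q a := by
  constructor
  · intro h
    have hne : w.filter (fun a => decide (q a)) ≠ [] := by
      intro hnil
      simp [cnt, hnil] at h
    rcases List.exists_mem_of_ne_nil _ hne with ⟨a, ha⟩
    rcases List.mem_filter.1 ha with ⟨h1, h2⟩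
    exact ⟨a, h1, by simpa using h2⟩
  · rintro ⟨a, ha, hq⟩
    have : a ∈ w.filter (fun a => decide (q a)) := List.mem_filter.2 ⟨ha, by simpa using hq⟩
    have hne : w.filter (fun a => decide (q a)) ≠ [] := List.ne_nil_of_mem this
    simpa [cnt, List.length_pos_iff] using hne

lemma cnt_eq_zero_iff (q : V → Prop) (w : List V) :
    cnt q w = 0 ↔ ∀ a ∈ w, ¬ q a := by
  have := cnt_pos_iff q w
  constructor
  · intro h a ha hq
    have : 0 < cnt q w := this.2 ⟨a, ha, hq⟩
    omega
  · intro h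
    by_contra hne
    rcases this.1 (Nat.pos_of_ne_zero hne) with ⟨a, ha, hq⟩
    exact h a ha hq

end MGAux

section Infra

variable {V : Type*} [Fintype V] [DecidableEq V] {G : Multigraph V}

set_option linter.unusedSectionVars false

lemma nil_mem_W : ([] : List V) ∈ WSpace G := by
  constructor <;> intros <;> simp

lemma count_pos_of_mem {w : List V} {a : V} (h : a ∈ w) : 0 < w.count a :=
  List.count_pos_iff.2 h

lemma eraseIdx_mem_W {w : List V} (hw : w ∈ WSpace G) (i : ℕ) :
    w.eraseIdx i ∈ WSpace G := by
  have hsub : List.Sublist (w.eraseIdx i) w := List.eraseIdx_sublist w i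
  constructor
  · intro a b hab hadj
    rcases hw.1 a b hab hadj with h | h
    · exact Or.inl (Nat.le_zero.1 (h ▸ hsub.count_le a))
    · exact Or.inr (Nat.le_zero.1 (h ▸ hsub.count_le b))
  · intro a ha
    exact le_trans (hsub.count_le a) (hw.2 a ha)

lemma append_mem_W {w : List V} {v : V} (hw : w ∈ WSpace G)
    (hnm : ∀ a ∈ w, ¬ G.Adj a v) : w ++ [v] ∈ WSpace G := by
  have hcount : ∀ x : V, (w ++ [v]).count x = w.count x + (if v = x then 1 else 0) := by
    intro x; simp [List.count_append, List.count_singleton']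
  have hvnot : ∀ x, G.Adj x v → x ∉ w := fun x hadj hx => hnm x hx hadj
  constructor
  · intro a b hab hadj
    rcases eq_or_ne b v with rfl | hbv
    · left
      have : a ∉ w := hvnot a hadj
      have : w.count a = 0 := List.count_eq_zero_of_not_mem this
      rw [hcount]
      simp [this]
      rintro rfl
      exact (hab rfl).elim
    · rcases eq_or_ne a v with rfl | hav
      · right
        have : b ∉ w := hvnot b (G.symm _ _ hadj)
        have hb0 : w.count b = 0 := List.count_eq_zero_of_not_mem this
        rw [hcount]
        simp [hb0]
        rintro rfl
        exact (hab rfl).elim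
      · rcases hw.1 a b hab hadj with h | h
        · left; rw [hcount, h]; simp [Ne.symm hav]
        · right; rw [hcount, h]; simp [Ne.symm hbv]
  · intro a ha
    rcases eq_or_ne a v with rfl | hav
    · have : a ∉ w := fun hx => hnm a hx ha
      have : w.count a = 0 := List.count_eq_zero_of_not_mem this
      rw [hcount, this]; simp
    · rw [hcount]
      simp [Ne.symm hav]
      exact hw.2 a ha

/-- finite superset of the support of one-step transitions from `w`. -/
noncomputable def Tfin (w : List V) : Finset (List V) :=
  (Finset.univ.image fun v : V => w ++ [v]) ∪
    (Finset.range w.length).image fun i => w.eraseIdx i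

variable {pol : Policy G}

lemma next_summable {w : List V} (hw : w ∈ WSpace G) (v : V) :
    Summable (pol.next w v) := by
  by_contra h
  have := tsum_eq_zero_of_not_summable h
  rw [pol.total w hw v] at this
  norm_num at this

lemma next_le_one {w : List V} (hw : w ∈ WSpace G) (v : V) (w' : List V) :
    pol.next w v w' ≤ 1 := by
  rw [← pol.total w hw v]
  exact Summable.le_tsum (next_summable hw v) w' (fun _ _ => pol.nonneg _ _ _)

lemma noMatch_support {w : List V} (hw : w ∈ WSpace G) {v : V}
    (hnm : ∀ a ∈ w, ¬ G.Adj a v) {w'' : List V} (hne : w'' ≠ w ++ [v]) :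
    pol.next w v w'' = 0 := by
  by_contra h
  have hpos : 0 < pol.next w v w'' := lt_of_le_of_ne (pol.nonneg _ _ _) (Ne.symm h)
  have h1 : pol.next w v (w ++ [v]) = 1 := pol.noMatch w hw v hnm
  have hsum : ∑ x ∈ ({w ++ [v], w''} : Finset (List V)), pol.next w v x ≤ 1 := by
    rw [← pol.total w hw v]
    exact Summable.sum_le_tsum _ (fun _ _ => pol.nonneg _ _ _) (next_summable hw v)
  rw [Finset.sum_pair (Ne.symm hne)] at hsum
  rw [h1] at hsum
  linarith

lemma next_support {w : List V} (hw : w ∈ WSpace G) {v : V} {w'' : List V}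
    (h : pol.next w v w'' ≠ 0) : w'' ∈ Tfin w := by
  by_cases hc : ∃ a ∈ w, G.Adj a v
  · rcases pol.matchRule w hw v hc w'' h with ⟨k, _, rfl⟩
    exact Finset.mem_union_right _
      (Finset.mem_image.2 ⟨k, Finset.mem_range.2 k.2, rfl⟩)
  · push_neg at hc
    have := fun hne => noMatch_support (pol := pol) hw hc (w'' := w'') hne
    have hww : w'' = w ++ [v] := by
      by_contra hne
      exact h (this hne)
    exact Finset.mem_union_left _
      (Finset.mem_image.2 ⟨v, Finset.mem_univ v, hww.symm⟩)

lemma next_mem_W {w : List V} (hw : w ∈ WSpace G) {v : V} {w'' : List V}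
    (h : pol.next w v w'' ≠ 0) : w'' ∈ WSpace G := by
  by_cases hc : ∃ a ∈ w, G.Adj a v
  · rcases pol.matchRule w hw v hc w'' h with ⟨k, _, rfl⟩
    exact eraseIdx_mem_W hw _
  · push_neg at hc
    have hww : w'' = w ++ [v] := by
      by_contra hne
      exact h (noMatch_support hw hc hne)
    rw [hww]
    exact append_mem_W hw hc

lemma next_exists_pos {w : List V} (hw : w ∈ WSpace G) (v : V) :
    ∃ w'', 0 < pol.next w v w'' := by
  by_contra h
  push_neg at h
  have hz : ∀ w'', pol.next w v w'' = 0 :=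
    fun w'' => le_antisymm (h w'') (pol.nonneg _ _ _)
  have := pol.total w hw v
  rw [tsum_congr (fun w'' => hz w'')] at this
  simp at this

variable {μ : V → ℝ}

lemma kernel_nonneg (hμ : ∀ v, 0 < μ v) (w w' : List V) :
    0 ≤ kernel G pol μ w w' :=
  Finset.sum_nonneg fun v _ => mul_nonneg (hμ v).le (pol.nonneg _ _ _)

lemma kernel_exists_next {w w' : List V} (hμ : ∀ v, 0 < μ v)
    (h : kernel G pol μ w w' ≠ 0) : ∃ v, pol.next w v w' ≠ 0 := by
  by_contra hz
  push_neg at hz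
  apply h
  unfold kernel
  exact Finset.sum_eq_zero fun v _ => by rw [hz v, mul_zero]

lemma kernel_pos_of_next {w w' : List V} (hμ : ∀ v, 0 < μ v) (v : V)
    (h : 0 < pol.next w v w') : 0 < kernel G pol μ w w' := by
  have h1 : μ v * pol.next w v w' ≤ kernel G pol μ w w' :=
    Finset.single_le_sum (f := fun u => μ u * pol.next w u w')
      (fun u _ => mul_nonneg (hμ u).le (pol.nonneg _ _ _)) (Finset.mem_univ v)
  have := mul_pos (hμ v) h
  linarith

lemma kernel_mem_W {w w' : List V} (hμ : ∀ v, 0 < μ v) (hw : w ∈ WSpace G)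
    (h : kernel G pol μ w w' ≠ 0) : w' ∈ WSpace G := by
  rcases kernel_exists_next hμ h with ⟨v, hv⟩
  exact next_mem_W hw hv

lemma kernel_support {w w' : List V} (hμ : ∀ v, 0 < μ v) (hw : w ∈ WSpace G)
    (h : kernel G pol μ w w' ≠ 0) : w' ∈ Tfin w := by
  rcases kernel_exists_next hμ h with ⟨v, hv⟩
  exact next_support hw hv

/-- The master step lemma: if every possible successor under arrival `v` has `g`-value
`c v`, then the expected `g`-value after one step is `∑ v, μ v * c v`. -/
lemma step_lemma {w : List V} (hw : w ∈ WSpace G) (g : List V → ℝ) (c : V → ℝ)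
    (hc : ∀ v, ∀ w'', pol.next w v w'' ≠ 0 → g w'' = c v) :
    ∑' w', kernel G pol μ w w' * g w' = ∑ v, μ v * c v := by
  have hpt : ∀ w', kernel G pol μ w w' * g w' =
      ∑ v, μ v * (pol.next w v w' * c v) := by
    intro w'
    unfold kernel
    rw [Finset.sum_mul]
    refine Finset.sum_congr rfl fun v _ => ?_
    by_cases h : pol.next w v w' = 0
    · simp [h]
    · rw [hc v w' h]; ring
  rw [tsum_congr hpt]
  rw [Summable.tsum_finsetSum (fun v _ => ((next_summable hw v).mul_right (c v)).mul_left (μ v))]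
  refine Finset.sum_congr rfl fun v _ => ?_
  rw [tsum_mul_left, tsum_mul_right, pol.total w hw v, one_mul]

lemma tsum_kernel_one {w : List V} (hw : w ∈ WSpace G) (hμ1 : ∑ v, μ v = 1) :
    ∑' w', kernel G pol μ w w' = 1 := by
  have := step_lemma (pol := pol) (μ := μ) hw (fun _ => (1 : ℝ)) (fun _ => 1) (fun _ _ _ => rfl)
  simpa [hμ1] using this

lemma tsum_kernel_mul_eq_sum {w : List V} (hμ : ∀ v, 0 < μ v) (hw : w ∈ WSpace G)
    (g : List V → ℝ) :
    ∑' w', kernel G pol μ w w' * g w' = ∑ w' ∈ Tfin w, kernel G pol μ w w' * g w' := by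
  refine tsum_eq_sum fun w' hw' => ?_
  have : kernel G pol μ w w' = 0 := by
    by_contra h
    exact hw' (kernel_support hμ hw h)
  rw [this, zero_mul]

end Infra

open MGAux

section Part

variable {V : Type*} [Fintype V] [DecidableEq V] {G : Multigraph V} {p : ℕ}

set_option linter.unusedSectionVars false

/-- mass of the non-looped vertices of part `j`. -/
noncomputable def AK (G : Multigraph V) (μ : V → ℝ) (f : V → Fin p) (j : Fin p) : ℝ :=
  ∑ v ∈ Finset.univ.filter (fun v => f v = j ∧ ¬ G.Adj v v), μ v

/-- mass of the looped vertices of part `j`. -/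
noncomputable def CK (G : Multigraph V) (μ : V → ℝ) (f : V → Fin p) (j : Fin p) : ℝ :=
  ∑ v ∈ Finset.univ.filter (fun v => f v = j ∧ G.Adj v v), μ v

/-- mass of the complement of part `j`. -/
noncomputable def BK (μ : V → ℝ) (f : V → Fin p) (j : Fin p) : ℝ :=
  ∑ v ∈ Finset.univ.filter (fun v => f v ≠ j), μ v

variable {μ : V → ℝ} {f : V → Fin p}

lemma ABC_sum (hμ1 : ∑ v, μ v = 1) (j : Fin p) :
    AK G μ f j + CK G μ f j + BK μ f j = 1 := by
  classical
  unfold AK CK BK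
  have e1 : (Finset.univ.filter (fun v => f v = j ∧ ¬ G.Adj v v))
      = (Finset.univ.filter (fun v => f v = j)).filter (fun v => ¬ G.Adj v v) := by
    rw [Finset.filter_filter]
  have e2 : (Finset.univ.filter (fun v => f v = j ∧ G.Adj v v))
      = (Finset.univ.filter (fun v => f v = j)).filter (fun v => G.Adj v v) := by
    rw [Finset.filter_filter]
  rw [e1, e2, add_comm (∑ v ∈ _, μ v),
    Finset.sum_filter_add_sum_filter_not (Finset.univ.filter (fun v => f v = j))
      (fun v => G.Adj v v) (fun v => μ v), ← hμ1,
    ← Finset.sum_filter_add_sum_filter_not Finset.univ (fun v => f v = j) (fun v => μ v)]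

lemma AK_nonneg (hμ : ∀ v, 0 < μ v) (j : Fin p) : 0 ≤ AK G μ f j :=
  Finset.sum_nonneg fun v _ => (hμ v).le

lemma BK_nonneg (hμ : ∀ v, 0 < μ v) (j : Fin p) : 0 ≤ BK μ f j :=
  Finset.sum_nonneg fun v _ => (hμ v).le

lemma BK_pos (hμ : ∀ v, 0 < μ v) (hsurj : Function.Surjective f) (hp : 2 ≤ p)
    (j : Fin p) : 0 < BK μ f j := by
  have : Nontrivial (Fin p) := Fin.nontrivial_iff_two_le.2 hp
  obtain ⟨i, hi⟩ := exists_ne j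
  obtain ⟨v, rfl⟩ := hsurj i
  refine Finset.sum_pos' (fun u _ => (hμ u).le) ⟨v, ?_, hμ v⟩
  simp [hi]

variable (hAdj : ∀ u v : V, (G.Adj u v ∧ u ≠ v) ↔ f u ≠ f v)
include hAdj

lemma adj_of_fne {u v : V} (h : f u ≠ f v) : G.Adj u v := ((hAdj u v).2 h).1

lemma fne_of_adj {u v : V} (h : G.Adj u v) (hne : u ≠ v) : f u ≠ f v :=
  (hAdj u v).1 ⟨h, hne⟩

lemma same_part {w : List V} (hw : w ∈ WSpace G) {a b : V} (ha : a ∈ w) (hb : b ∈ w) :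
    f a = f b := by
  by_contra hne
  have hab : a ≠ b := fun h => hne (h ▸ rfl)
  have hadj : G.Adj a b := adj_of_fne hAdj hne
  rcases hw.1 a b hab hadj with h | h
  · exact absurd h (count_pos_of_mem ha).ne'
  · exact absurd h (count_pos_of_mem hb).ne'

variable {pol : Policy G}

/-- From a nonempty single-part state, every possible successor keeps all its letters
in the same part. -/
lemma succ_letters {w : List V} (hw : w ∈ WSpace G) (hne : w ≠ []) {j : Fin p}
    (hj : ∀ a ∈ w, f a = j) {v : V} {w'' : List V} (h : pol.next w v w'' ≠ 0) :
    ∀ a ∈ w'', f a = j := by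
  by_cases hc : ∃ a ∈ w, G.Adj a v
  · rcases pol.matchRule w hw v hc w'' h with ⟨k, _, rfl⟩
    intro a ha
    exact hj a ((List.eraseIdx_sublist w k).subset ha)
  · push_neg at hc
    have hfv : f v = j := by
      by_contra hfv
      rcases List.exists_mem_of_ne_nil w hne with ⟨a₀, ha₀⟩
      have : f a₀ ≠ f v := by rw [hj a₀ ha₀]; exact fun h' => hfv h'.symm
      exact hc a₀ ha₀ (adj_of_fne hAdj this)
    have hww : w'' = w ++ [v] := by
      by_contra hne'
      exact h (noMatch_support (pol := pol) hw hc hne')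
    subst hww
    intro a ha
    rcases List.mem_append.1 ha with h' | h'
    · exact hj a h'
    · simp at h'; subst h'; exact hfv

/-- Classification A/B: an arrival of the same part which is non-looped — or looped but
not present — is appended. -/
lemma class_append {w : List V} (hw : w ∈ WSpace G) {j : Fin p}
    (hj : ∀ a ∈ w, f a = j) {v : V} (hfv : f v = j)
    (hvw : ¬ G.Adj v v ∨ v ∉ w) {w'' : List V} (h : pol.next w v w'' ≠ 0) :
    w'' = w ++ [v] := by
  have hc : ∀ a ∈ w, ¬ G.Adj a v := by
    intro a ha hadj
    rcases eq_or_ne a v with rfl | hav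
    · rcases hvw with h' | h' 
      · exact h' hadj
      · exact h' ha
    · exact fne_of_adj hAdj hadj hav (by rw [hj a ha, hfv])
  by_contra hne'
  exact h (noMatch_support (pol := pol) hw hc hne')

/-- Classification C: looped same-part arrival already present: a copy of it is erased. -/
lemma class_loop_match {w : List V} (hw : w ∈ WSpace G) {j : Fin p}
    (hj : ∀ a ∈ w, f a = j) {v : V} (hfv : f v = j) (hloop : G.Adj v v) (hvw : v ∈ w)
    {w'' : List V} (h : pol.next w v w'' ≠ 0) :
    ∃ i : Fin w.length, w.get i = v ∧ w'' = w.eraseIdx i := by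
  rcases pol.matchRule w hw v ⟨v, hvw, hloop⟩ w'' h with ⟨i, hadj, rfl⟩
  refine ⟨i, ?_, rfl⟩
  by_contra hne'
  exact fne_of_adj hAdj hadj hne' (by rw [hj _ (List.get_mem w i), hfv])

/-- Classification D: cross-part arrival with a non-looped item in line: a non-looped
item is erased (V₂-favorability). -/
lemma class_cross_nl (hfav : V2Favorable G pol) {w : List V} (hw : w ∈ WSpace G)
    {j : Fin p} (hj : ∀ a ∈ w, f a = j) {v : V} (hfv : f v ≠ j)
    (hnl : 0 < cnt (fun a => ¬ G.Adj a a) w)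
    {w'' : List V} (h : pol.next w v w'' ≠ 0) :
    ∃ i : Fin w.length, ¬ G.Adj (w.get i) (w.get i) ∧ w'' = w.eraseIdx i := by
  rcases (cnt_pos_iff _ _).1 hnl with ⟨a, haw, hanl⟩
  have hane : a ≠ v := fun h' => hfv (h' ▸ hj a haw)
  have : G.Adj a v := adj_of_fne hAdj (by rw [hj a haw]; exact fun h' => hfv h'.symm)
  rcases hfav w hw v ⟨a, haw, this, hanl⟩ w'' h with ⟨i, _, hnl', rfl⟩
  exact ⟨i, hnl', rfl⟩

/-- Classification E: cross-part arrival, only looped items in line: a looped item is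
erased. -/
lemma class_cross_loop {w : List V} (hw : w ∈ WSpace G) (hne : w ≠ [])
    {j : Fin p} (hj : ∀ a ∈ w, f a = j) {v : V} (hfv : f v ≠ j)
    (hz : cnt (fun a => ¬ G.Adj a a) w = 0)
    {w'' : List V} (h : pol.next w v w'' ≠ 0) :
    ∃ i : Fin w.length, G.Adj (w.get i) (w.get i) ∧ w'' = w.eraseIdx i := by
  rcases List.exists_mem_of_ne_nil w hne with ⟨a₀, ha₀⟩
  have hadj : G.Adj a₀ v := adj_of_fne hAdj (by rw [hj a₀ ha₀]; exact fun h' => hfv h'.symm)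
  rcases pol.matchRule w hw v ⟨a₀, ha₀, hadj⟩ w'' h with ⟨i, hadji, rfl⟩
  refine ⟨i, ?_, rfl⟩
  by_contra hnl
  exact ((cnt_eq_zero_iff _ _).1 hz (w.get i) (List.get_mem w i)) hnl

end Part

section Master

variable {V : Type*} [Fintype V] [DecidableEq V] {G : Multigraph V} {p : ℕ}

set_option linter.unusedSectionVars false

open MGAux

/-- Indicator that the state is within part `k` with at least `m` non-looped items. -/
noncomputable def gmF (G : Multigraph V) (f : V → Fin p) (k : Fin p) (m : ℕ)
    (w : List V) : ℝ :=
  if (∀ a ∈ w, f a = k) ∧ m ≤ cnt (fun a => f a = k ∧ ¬ G.Adj a a) w then 1 else 0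

/-- Indicator that the state is within part `k` with exactly `m` non-looped items. -/
noncomputable def emF (G : Multigraph V) (f : V → Fin p) (k : Fin p) (m : ℕ)
    (w : List V) : ℝ :=
  if (∀ a ∈ w, f a = k) ∧ cnt (fun a => f a = k ∧ ¬ G.Adj a a) w = m then 1 else 0

variable {f : V → Fin p} {k : Fin p}

lemma gmF_all {u : List V} (hall : ∀ a ∈ u, f a = k) (n : ℕ) :
    gmF G f k n u = if n ≤ cnt (fun a => f a = k ∧ ¬ G.Adj a a) u then 1 else 0 := by
  simp only [gmF]
  by_cases h : n ≤ cnt (fun a => f a = k ∧ ¬ G.Adj a a) u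
  · rw [if_pos ⟨hall, h⟩, if_pos h]
  · rw [if_neg (fun hc => h hc.2), if_neg h]

lemma gmF_not {u : List V} {a : V} (ha : a ∈ u) (hfa : f a ≠ k) (n : ℕ) :
    gmF G f k n u = 0 := by
  simp only [gmF]
  exact if_neg (fun hc => hfa (hc.1 a ha))

lemma emF_all {u : List V} (hall : ∀ a ∈ u, f a = k) (n : ℕ) :
    emF G f k n u = if cnt (fun a => f a = k ∧ ¬ G.Adj a a) u = n then 1 else 0 := by
  simp only [emF]
  by_cases h : cnt (fun a => f a = k ∧ ¬ G.Adj a a) u = n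
  · rw [if_pos ⟨hall, h⟩, if_pos h]
  · rw [if_neg (fun hc => h hc.2), if_neg h]

lemma emF_not {u : List V} {a : V} (ha : a ∈ u) (hfa : f a ≠ k) (n : ℕ) :
    emF G f k n u = 0 := by
  simp only [emF]
  exact if_neg (fun hc => hfa (hc.1 a ha))

lemma cnt_congr {q q' : V → Prop} {w : List V} (h : ∀ a ∈ w, q a ↔ q' a) :
    cnt q w = cnt q' w := by
  unfold cnt
  congr 1
  apply List.filter_congr
  intro a ha
  exact decide_eq_decide.2 (h a ha)

lemma cnt_single (q : V → Prop) (v : V) :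
    cnt q [v] = if q v then 1 else 0 := by
  rw [show ([v] : List V) = [] ++ [v] by simp, cnt_append, cnt_nil]
  simp

/-- arithmetic identity behind the indicator master equation -/
private lemma ind_arith (h m : ℕ) (A B C : ℝ) (hsum : A + C + B = 1) :
    A * (if m ≤ h then (1:ℝ) else 0) + C * (if m+1 ≤ h then (1:ℝ) else 0)
      + B * (if m+2 ≤ h then (1:ℝ) else 0)
    = (if m+1 ≤ h then (1:ℝ) else 0) + A * (if h = m then (1:ℝ) else 0)
      - B * (if h = m+1 then (1:ℝ) else 0) := by
  by_cases c1 : m ≤ h <;> by_cases c2 : m+1 ≤ h <;> by_cases c3 : m+2 ≤ h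
  · rw [if_pos c1, if_pos c2, if_pos c3, if_neg (by omega), if_neg (by omega)]; linarith
  · rw [if_pos c1, if_pos c2, if_neg c3, if_neg (by omega), if_pos (by omega)]; linarith
  · omega
  · rw [if_pos c1, if_neg c2, if_neg c3, if_pos (by omega), if_neg (by omega)]; linarith
  · omega
  · omega
  · omega
  · rw [if_neg c1, if_neg c2, if_neg c3, if_neg (by omega), if_neg (by omega)]; linarith

variable {μ : V → ℝ} {pol : Policy G}

lemma master_empty (g : List V → ℝ) :
    ∑' w', kernel G pol μ [] w' * g w' = ∑ v, μ v * g [v] := by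
  refine step_lemma nil_mem_W g (fun v => g [v]) ?_
  intro v w'' h
  have hc : ∀ a ∈ ([] : List V), ¬ G.Adj a v := by simp
  have hww : w'' = [] ++ [v] := by
    by_contra hne
    exact h (noMatch_support (pol := pol) nil_mem_W hc hne)
  rw [hww]
  rfl

/-- split of `∑ v, μ v * c v` when `c` is constant on the three blocks -/
private lemma sum_split (hμ1 : ∑ v, μ v = 1) (j : Fin p) (x y z : ℝ)
    (c : V → ℝ) (hc : ∀ v, c v = if f v = j then (if G.Adj v v then y else x) else z) :
    ∑ v, μ v * c v = AK G μ f j * x + CK G μ f j * y + BK μ f j * z := by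
  have : ∀ v, μ v * c v =
      (if f v = j ∧ ¬ G.Adj v v then μ v * x else 0)
      + (if f v = j ∧ G.Adj v v then μ v * y else 0)
      + (if ¬(f v = j) then μ v * z else 0) := by
    intro v
    rw [hc v]
    by_cases h1 : f v = j <;> by_cases h2 : G.Adj v v <;>
      simp [h1, h2] <;> ring
  rw [Finset.sum_congr rfl (fun v _ => this v)]
  rw [Finset.sum_add_distrib, Finset.sum_add_distrib]
  congr 1
  · congr 1
    · rw [← Finset.sum_filter, AK, Finset.sum_mul]
    · rw [← Finset.sum_filter, CK, Finset.sum_mul]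
  · rw [← Finset.sum_filter, BK, Finset.sum_mul]

variable (hAdj : ∀ u v : V, (G.Adj u v ∧ u ≠ v) ↔ f u ≠ f v)
include hAdj

/-- Master drift identity: one-step expectation of the number of non-looped items,
from a nonempty state of part `j`. -/
lemma master_drift (hfav : V2Favorable G pol) (hμ1 : ∑ v, μ v = 1) {w : List V}
    (hw : w ∈ WSpace G) {j : Fin p} (hj : ∀ a ∈ w, f a = j) (hne : w ≠ []) :
    ∑' w', kernel G pol μ w w' * (cnt (fun a => ¬ G.Adj a a) w' : ℝ)
      = (cnt (fun a => ¬ G.Adj a a) w : ℝ) + AK G μ f j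
        - (if 0 < cnt (fun a => ¬ G.Adj a a) w then BK μ f j else 0) := by
  set NL : V → Prop := fun a => ¬ G.Adj a a with hNL
  set h : ℕ := cnt NL w with hh
  set c : V → ℝ := fun v => if f v = j then (if G.Adj v v then (h:ℝ) else (h:ℝ)+1)
      else (if 0 < h then (h:ℝ)-1 else (h:ℝ)) with hcdef
  have hstep : ∑' w', kernel G pol μ w w' * (cnt NL w' : ℝ) = ∑ v, μ v * c v := by
    refine step_lemma hw _ c ?_
    intro v w'' hnext
    by_cases hfv : f v = j
    · by_cases hloop : G.Adj v v
      · by_cases hvw : v ∈ w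
        · rcases class_loop_match hAdj hw hj hfv hloop hvw hnext with ⟨i, hgi, rfl⟩
          have : cnt NL (w.eraseIdx i) = h := by
            have := cnt_eraseIdx NL w i
            rw [hgi, if_neg (fun hn => hn hloop)] at this
            omega
          rw [this, hcdef]
          simp [hfv, hloop]
        · have hww : w'' = w ++ [v] :=
            class_append hAdj hw hj hfv (Or.inr hvw) hnext
          rw [hww, cnt_append, if_neg (fun hn : NL v => hn hloop)]
          simp [hcdef, hfv, hloop]
          exact hh.symm
      · have hww : w'' = w ++ [v] :=
          class_append hAdj hw hj hfv (Or.inl hloop) hnext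
        rw [hww, cnt_append, if_pos (hloop : NL v)]
        simp [hcdef, hfv, hloop]
        exact hh.symm
    · by_cases hpos : 0 < h
      · rcases class_cross_nl hAdj hfav hw hj hfv hpos hnext with ⟨i, hnl, rfl⟩
        have hkey := cnt_eraseIdx NL w i
        rw [if_pos (hnl : NL (w.get i))] at hkey
        have : (cnt NL (w.eraseIdx i) : ℝ) = (h : ℝ) - 1 := by
          have h1 : cnt NL (w.eraseIdx i) + 1 = h := hkey
          have := congrArg (fun n : ℕ => (n : ℝ)) h1
          push_cast at this
          linarith
        rw [this, hcdef]
        simp [hfv, hpos]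
      · have hz : cnt NL w = 0 := by omega
        rcases class_cross_loop hAdj hw hne hj hfv hz hnext with ⟨i, hloopi, rfl⟩
        have hkey := cnt_eraseIdx NL w i
        rw [if_neg (fun hn : NL (w.get i) => hn hloopi)] at hkey
        have : cnt NL (w.eraseIdx i) = h := by omega
        rw [this, hcdef]
        simp [hfv, hpos]
  rw [hstep]
  rw [sum_split hμ1 j ((h:ℝ)+1) (h:ℝ) (if 0 < h then (h:ℝ)-1 else (h:ℝ)) c (fun v => rfl)]
  have hsum := ABC_sum (G := G) (f := f) hμ1 j
  by_cases hpos : 0 < h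
  · rw [if_pos hpos, if_pos hpos]
    linear_combination (h : ℝ) * hsum + hsum - hsum
  · rw [if_neg hpos, if_neg hpos]
    linear_combination (h : ℝ) * hsum

/-- Master indicator identity: one-step expectation of the indicator
`{part k, at least m+1 non-looped items}`. -/
lemma master_ind (hfav : V2Favorable G pol) (hμ1 : ∑ v, μ v = 1) {w : List V}
    (hw : w ∈ WSpace G) (m : ℕ) :
    ∑' w', kernel G pol μ w w' * gmF G f k (m+1) w'
      = gmF G f k (m+1) w + AK G μ f k * emF G f k m w
        - BK μ f k * emF G f k (m+1) w := by
  set Q : V → Prop := fun a => f a = k ∧ ¬ G.Adj a a with hQ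
  rcases eq_or_ne w [] with rfl | hne
  · -- empty state
    rw [master_empty]
    have hgw : gmF G f k (m+1) ([] : List V) = 0 := by
      simp only [gmF]
      rw [if_neg]
      rintro ⟨h1, h2⟩
      rw [cnt_nil] at h2
      omega
    have hew : emF G f k (m+1) ([] : List V) = 0 := by
      simp only [emF]
      rw [if_neg]
      rintro ⟨h1, h2⟩
      rw [cnt_nil] at h2
      omega
    rcases eq_or_ne m 0 with rfl | hm
    · have hval : ∀ v, gmF G f k 1 [v] = if Q v then (1:ℝ) else 0 := by
        intro v
        by_cases hq : Q v
        · rw [if_pos hq]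
          rw [gmF_all (by intro a ha; simp at ha; subst ha; exact hq.1)]
          rw [if_pos (by rw [cnt_single, if_pos hq])]
        · rw [if_neg hq]
          simp only [gmF]
          rw [if_neg]
          rintro ⟨h1, h2⟩
          rw [cnt_single, if_neg hq] at h2
          omega
      have he0 : emF G f k 0 ([] : List V) = 1 := by
        simp only [emF]
        rw [if_pos ⟨by simp, cnt_nil Q⟩]
      rw [Finset.sum_congr rfl (fun v _ => by rw [hval v])]
      rw [hgw, hew, he0]
      have : ∑ v, μ v * (if Q v then (1:ℝ) else 0) = AK G μ f k := by
        rw [AK, Finset.sum_filter]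
        refine Finset.sum_congr rfl (fun v _ => ?_)
        by_cases hq : Q v
        · rw [if_pos hq, if_pos (show f v = k ∧ ¬ G.Adj v v from hq), mul_one]
        · rw [if_neg hq, if_neg (show ¬(f v = k ∧ ¬ G.Adj v v) from hq), mul_zero]
      rw [this]
      ring
    · have hval : ∀ v, gmF G f k (m+1) [v] = 0 := by
        intro v
        simp only [gmF]
        rw [if_neg]
        rintro ⟨h1, h2⟩
        rw [cnt_single] at h2
        split_ifs at h2 <;> omega
      have he0 : emF G f k m ([] : List V) = 0 := by
        simp only [emF]
        rw [if_neg]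
        rintro ⟨h1, h2⟩
        rw [cnt_nil] at h2
        omega
      rw [Finset.sum_congr rfl (fun v _ => by rw [hval v])]
      rw [hgw, hew, he0]
      simp
  · -- nonempty state
    rcases List.exists_mem_of_ne_nil w hne with ⟨a₀, ha₀⟩
    set j : Fin p := f a₀ with hjdef
    have hj : ∀ a ∈ w, f a = j := fun a ha => same_part hAdj hw ha ha₀
    by_cases hjk : j = k
    · replace hj : ∀ a ∈ w, f a = k := fun a ha => (hj a ha).trans hjk
      set h : ℕ := cnt Q w with hh
      have hcnt_eq : cnt (fun a => ¬ G.Adj a a) w = h := by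
        rw [hh]
        exact cnt_congr (fun a ha => ⟨fun hnl => ⟨hj a ha, hnl⟩, fun hq => hq.2⟩)
      set c : V → ℝ := fun v => if f v = k then
          (if G.Adj v v then (if m+1 ≤ h then (1:ℝ) else 0)
            else (if m ≤ h then (1:ℝ) else 0))
          else (if m+2 ≤ h then (1:ℝ) else 0) with hcdef
      have hstep : ∑' w', kernel G pol μ w w' * gmF G f k (m+1) w' = ∑ v, μ v * c v := by
        refine step_lemma hw _ c ?_
        intro v w'' hnext
        have hsucc : ∀ a ∈ w'', f a = k := succ_letters hAdj hw hne hj hnext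
        rw [gmF_all hsucc, ← hQ]
        by_cases hfv : f v = k
        · by_cases hloop : G.Adj v v
          · by_cases hvw : v ∈ w
            · rcases class_loop_match hAdj hw hj hfv hloop hvw hnext with ⟨i, hgi, rfl⟩
              have hci : cnt Q (w.eraseIdx i) = h := by
                have := cnt_eraseIdx Q w i
                rw [hgi, if_neg (fun hn : Q v => hn.2 hloop)] at this
                omega
              rw [hci, hcdef]
              simp [hfv, hloop]
            · rw [class_append hAdj hw hj hfv (Or.inr hvw) hnext,
                cnt_append, if_neg (fun hn : Q v => hn.2 hloop)]
              simp [hcdef, hfv, hloop]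
              rw [← hh]
          · rw [class_append hAdj hw hj hfv (Or.inl hloop) hnext,
              cnt_append, if_pos (⟨hfv, hloop⟩ : Q v)]
            rw [hcdef]
            simp only [if_pos hfv, if_neg hloop]
            exact if_congr (by omega) rfl rfl
        · by_cases hpos : 0 < h
          · have hpos' : 0 < cnt (fun a => ¬ G.Adj a a) w := by omega
            rcases class_cross_nl hAdj hfav hw hj hfv hpos' hnext with ⟨i, hnl, rfl⟩
            have hq : Q (w.get i) := ⟨hj _ (List.get_mem w i), hnl⟩
            have hkey := cnt_eraseIdx Q w i
            rw [if_pos hq] at hkey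
            have hci : cnt Q (w.eraseIdx i) = h - 1 := by omega
            rw [hci, hcdef]
            simp only [if_neg hfv]
            exact if_congr (by omega) rfl rfl
          · have hz : cnt (fun a => ¬ G.Adj a a) w = 0 := by omega
            rcases class_cross_loop hAdj hw hne hj hfv hz hnext with ⟨i, hloopi, rfl⟩
            have hkey := cnt_eraseIdx Q w i
            rw [if_neg (fun hn : Q (w.get i) => hn.2 hloopi)] at hkey
            have hci : cnt Q (w.eraseIdx i) = h := by omega
            rw [hci, hcdef]
            simp only [if_neg hfv]
            exact if_congr (by omega) rfl rfl
      rw [hstep]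
      rw [sum_split hμ1 k (if m ≤ h then (1:ℝ) else 0) (if m+1 ≤ h then (1:ℝ) else 0)
        (if m+2 ≤ h then (1:ℝ) else 0) c (fun v => rfl)]
      rw [gmF_all hj, emF_all hj, emF_all hj]
      exact ind_arith h m _ _ _ (ABC_sum (G := G) (f := f) hμ1 k)
    · -- part `j ≠ k`: everything vanishes
      have hstep : ∑' w', kernel G pol μ w w' * gmF G f k (m+1) w'
          = ∑ v, μ v * (0:ℝ) := by
        refine step_lemma hw _ (fun _ => (0:ℝ)) ?_
        intro v w'' hnext
        have hsucc : ∀ a ∈ w'', f a = j := succ_letters hAdj hw hne hj hnext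
        rcases eq_or_ne w'' [] with rfl | hne''
        · simp only [gmF]
          rw [if_neg]
          rintro ⟨h1, h2⟩
          rw [cnt_nil] at h2
          omega
        · rcases List.exists_mem_of_ne_nil w'' hne'' with ⟨b, hb⟩
          exact gmF_not hb (by rw [hsucc b hb]; exact hjk) _
      rw [hstep]
      rw [gmF_not ha₀ hjk, emF_not ha₀ hjk, emF_not ha₀ hjk]
      simp

end Master

section Irred

variable {V : Type*} [Fintype V] [DecidableEq V] {G : Multigraph V} {p : ℕ}
  {f : V → Fin p} {μ : V → ℝ} {pol : Policy G}

set_option linter.unusedSectionVars false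

open MGAux

lemma W_of_sublist {u w : List V} (hsub : List.Sublist u w) (hw : w ∈ WSpace G) :
    u ∈ WSpace G := by
  constructor
  · intro a b hab hadj
    rcases hw.1 a b hab hadj with h | h
    · exact Or.inl (Nat.le_zero.1 (h ▸ hsub.count_le a))
    · exact Or.inr (Nat.le_zero.1 (h ▸ hsub.count_le b))
  · intro a ha
    exact le_trans (hsub.count_le a) (hw.2 a ha)

variable (hAdj : ∀ u v : V, (G.Adj u v ∧ u ≠ v) ↔ f u ≠ f v)
include hAdj

lemma reach_nil (hμ : ∀ v, 0 < μ v) (hsurj : Function.Surjective f) (hp : 2 ≤ p)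
    {w : List V} (hw : w ∈ WSpace G) :
    Relation.ReflTransGen (fun a b => 0 < kernel G pol μ a b) w [] := by
  have : Nontrivial (Fin p) := Fin.nontrivial_iff_two_le.2 hp
  obtain ⟨n, hn⟩ : ∃ n, w.length = n := ⟨w.length, rfl⟩
  induction n using Nat.strong_induction_on generalizing w with
  | _ n ih =>
    rcases eq_or_ne w [] with rfl | hne
    · exact Relation.ReflTransGen.refl
    · rcases List.exists_mem_of_ne_nil w hne with ⟨a₀, ha₀⟩
      obtain ⟨j', hj'⟩ := exists_ne (f a₀)
      obtain ⟨u, rfl⟩ := hsurj j'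
      have hadj : G.Adj a₀ u := adj_of_fne hAdj (Ne.symm hj')
      obtain ⟨w'', hpos⟩ := next_exists_pos (pol := pol) hw u
      obtain ⟨i, _, rfl⟩ := pol.matchRule w hw u ⟨a₀, ha₀, hadj⟩ w'' hpos.ne'
      have hW'' : w.eraseIdx i ∈ WSpace G := eraseIdx_mem_W hw i
      have hlen : (w.eraseIdx i.1).length = n - 1 := by
        rw [List.length_eraseIdx_of_lt i.2, hn]
      have hlt : n - 1 < n := by
        have : 0 < n := by
          rw [← hn]
          exact List.length_pos_iff.2 hne
        omega
      exact Relation.ReflTransGen.head (kernel_pos_of_next hμ u hpos)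
        (ih (n-1) hlt hW'' hlen)

lemma reach_from_nil (hμ : ∀ v, 0 < μ v) {w' : List V} (hw' : w' ∈ WSpace G) :
    Relation.ReflTransGen (fun a b => 0 < kernel G pol μ a b) [] w' := by
  clear hAdj
  induction w' using List.reverseRecOn with
  | nil => exact Relation.ReflTransGen.refl
  | append_singleton ys y ih =>
    have hys : ys ∈ WSpace G := W_of_sublist (by simp) hw'
    have hnm : ∀ b ∈ ys, ¬ G.Adj b y := by
      intro b hb hadj
      rcases eq_or_ne b y with rfl | hby
      · have h2 := hw'.2 b hadj
        have : (ys ++ [b]).count b = ys.count b + 1 := by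
          simp [List.count_append]
        have hbpos : 0 < ys.count b := count_pos_of_mem hb
        omega
      · rcases hw'.1 b y hby hadj with h | h
        · have : 0 < (ys ++ [y]).count b :=
            count_pos_of_mem (List.mem_append_left _ hb)
          omega
        · have : 0 < (ys ++ [y]).count y :=
            count_pos_of_mem (List.mem_append_right _ (by simp))
          omega
    have hnext : pol.next ys y (ys ++ [y]) = 1 := pol.noMatch ys hys y hnm
    exact Relation.ReflTransGen.tail (ih hys)
      (kernel_pos_of_next hμ y (by rw [hnext]; norm_num))

lemma irreducible_kernel (hμ : ∀ v, 0 < μ v) (hsurj : Function.Surjective f)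
    (hp : 2 ≤ p) : Irreducible G (kernel G pol μ) := by
  intro w hw w' hw'
  exact (reach_nil hAdj hμ hsurj hp hw).trans (reach_from_nil hAdj hμ hw')

end Irred

section Necess

variable {V : Type*} [Fintype V] [DecidableEq V] {G : Multigraph V} {p : ℕ}
  {f : V → Fin p} {μ : V → ℝ} {pol : Policy G} {π : List V → ℝ}

set_option linter.unusedSectionVars false

open MGAux

lemma pi_summable (hπ : IsStationary G (kernel G pol μ) π) : Summable π := by
  by_contra h
  have := tsum_eq_zero_of_not_summable h
  rw [hπ.2.2.1] at this
  norm_num at this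

lemma kernel_summable {w : List V} (hμ1 : ∑ v, μ v = 1) (hw : w ∈ WSpace G) :
    Summable (kernel G pol μ w) := by
  by_contra h
  have := tsum_eq_zero_of_not_summable h
  rw [tsum_kernel_one hw hμ1] at this
  norm_num at this

lemma kernel_le_one {w : List V} (hμ : ∀ v, 0 < μ v) (hμ1 : ∑ v, μ v = 1)
    (hw : w ∈ WSpace G) (w' : List V) : kernel G pol μ w w' ≤ 1 := by
  rw [← tsum_kernel_one (pol := pol) (μ := μ) hw hμ1]
  exact Summable.le_tsum (kernel_summable hμ1 hw) w' (fun _ _ => kernel_nonneg hμ _ _)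

lemma pi_mul_kernel_le (hμ : ∀ v, 0 < μ v) (hμ1 : ∑ v, μ v = 1)
    (hπ : IsStationary G (kernel G pol μ) π) (w w' : List V) :
    π w * kernel G pol μ w w' ≤ π w := by
  by_cases hw : w ∈ WSpace G
  · calc π w * kernel G pol μ w w' ≤ π w * 1 :=
        mul_le_mul_of_nonneg_left (kernel_le_one hμ hμ1 hw w') (hπ.1 w)
    _ = π w := mul_one _
  · rw [hπ.2.1 w hw]
    simp

lemma pi_mul_kernel_summable (hμ : ∀ v, 0 < μ v) (hμ1 : ∑ v, μ v = 1)
    (hπ : IsStationary G (kernel G pol μ) π) (w' : List V) :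
    Summable (fun w => π w * kernel G pol μ w w') :=
  Summable.of_nonneg_of_le
    (fun w => mul_nonneg (hπ.1 w) (kernel_nonneg hμ _ _))
    (fun w => pi_mul_kernel_le hμ hμ1 hπ w w') (pi_summable hπ)

lemma pi_pos (hμ : ∀ v, 0 < μ v) (hμ1 : ∑ v, μ v = 1)
    (hπ : IsStationary G (kernel G pol μ) π)
    (hirr : Irreducible G (kernel G pol μ)) {w : List V} (hw : w ∈ WSpace G) :
    0 < π w := by
  -- find a state with positive mass
  obtain ⟨w₀, hw₀⟩ : ∃ w₀, π w₀ ≠ 0 := by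
    by_contra h
    push_neg at h
    have : (∑' w, π w) = 0 := by
      rw [tsum_congr h]
      exact tsum_zero
    rw [hπ.2.2.1] at this
    norm_num at this
  have hw₀W : w₀ ∈ WSpace G := by
    by_contra h
    exact hw₀ (hπ.2.1 w₀ h)
  have hw₀pos : 0 < π w₀ := lt_of_le_of_ne (hπ.1 w₀) (Ne.symm hw₀)
  have hreach := hirr w₀ hw₀W w hw
  clear hw₀ hw₀W hw
  induction hreach with
  | refl => exact hw₀pos
  | @tail b c hab hbc ih =>
    calc (0:ℝ) < π b * kernel G pol μ b c := mul_pos ih hbc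
    _ ≤ ∑' w, π w * kernel G pol μ w c :=
        Summable.le_tsum (pi_mul_kernel_summable hμ hμ1 hπ c) b
          (fun w _ => mul_nonneg (hπ.1 w) (kernel_nonneg hμ _ _))
    _ = π c := hπ.2.2.2 c

/-- stationarity against a bounded nonnegative test function. -/
lemma stationary_test (hμ : ∀ v, 0 < μ v) (hμ1 : ∑ v, μ v = 1)
    (hπ : IsStationary G (kernel G pol μ) π) (g : List V → ℝ)
    (hg0 : ∀ w, 0 ≤ g w) (hg1 : ∀ w, g w ≤ 1) :
    ∑' w, π w * (∑' w', kernel G pol μ w w' * g w') = ∑' w', π w' * g w' := by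
  set F : List V × List V → ℝ := fun q => π q.1 * (kernel G pol μ q.1 q.2 * g q.2)
    with hF
  have hF0 : 0 ≤ F := by
    rintro ⟨w, w'⟩
    exact mul_nonneg (hπ.1 w) (mul_nonneg (kernel_nonneg hμ _ _) (hg0 w'))
  have hrow : ∀ w, Summable fun w' => F (w, w') := by
    intro w
    by_cases hw : w ∈ WSpace G
    · refine Summable.of_nonneg_of_le (fun w' => hF0 (w, w')) ?_
        ((kernel_summable (pol := pol) hμ1 hw).mul_left (π w))
      intro w'
      simp only [hF]
      rw [← mul_assoc, mul_comm (π w), mul_assoc]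
      refine mul_le_mul_of_nonneg_left ?_ (kernel_nonneg hμ _ _)
      calc π w * g w' ≤ π w * 1 := mul_le_mul_of_nonneg_left (hg1 w') (hπ.1 w)
      _ = π w := mul_one _
    · have : ∀ w', F (w, w') = 0 := by
        intro w'
        simp [hF, hπ.2.1 w hw]
      exact (summable_congr (fun w' => (this w').symm)).1 summable_zero
  have hinner_le : ∀ w, ∑' w', F (w, w') ≤ π w := by
    intro w
    by_cases hw : w ∈ WSpace G
    · have : ∑' w', F (w, w') = π w * ∑' w', kernel G pol μ w w' * g w' := by
        rw [← tsum_mul_left]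
      rw [this]
      have h1 : ∑' w', kernel G pol μ w w' * g w' ≤ 1 := by
        rw [← tsum_kernel_one (pol := pol) (μ := μ) hw hμ1]
        refine Summable.tsum_le_tsum ?_ ?_ (kernel_summable hμ1 hw)
        · intro w'
          calc kernel G pol μ w w' * g w' ≤ kernel G pol μ w w' * 1 :=
              mul_le_mul_of_nonneg_left (hg1 w') (kernel_nonneg hμ _ _)
          _ = kernel G pol μ w w' := mul_one _
        · exact (Summable.of_nonneg_of_le
            (fun w' => mul_nonneg (kernel_nonneg hμ _ _) (hg0 w'))
            (fun w' => by
              calc kernel G pol μ w w' * g w' ≤ kernel G pol μ w w' * 1 :=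
                  mul_le_mul_of_nonneg_left (hg1 w') (kernel_nonneg hμ _ _)
              _ = kernel G pol μ w w' := mul_one _)
            (kernel_summable hμ1 hw))
      calc π w * ∑' w', kernel G pol μ w w' * g w' ≤ π w * 1 :=
          mul_le_mul_of_nonneg_left h1 (hπ.1 w)
      _ = π w := mul_one _
    · have : ∀ w', F (w, w') = 0 := fun w' => by simp [hF, hπ.2.1 w hw]
      rw [tsum_congr this, tsum_zero]
      exact hπ.1 w
  have hinner_summ : Summable fun w => ∑' w', F (w, w') :=
    Summable.of_nonneg_of_le (fun w => tsum_nonneg (fun w' => hF0 (w, w')))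
      hinner_le (pi_summable hπ)
  have hFsumm : Summable F := (summable_prod_of_nonneg hF0).2 ⟨hrow, hinner_summ⟩
  have hcol : ∀ w', Summable fun w => F (w, w') := by
    intro w'
    refine Summable.of_nonneg_of_le (fun w => hF0 (w, w')) ?_ (pi_summable hπ)
    intro w
    simp only [hF]
    calc π w * (kernel G pol μ w w' * g w')
        ≤ π w * (kernel G pol μ w w' * 1) := by
          refine mul_le_mul_of_nonneg_left ?_ (hπ.1 w)
          exact mul_le_mul_of_nonneg_left (hg1 w') (kernel_nonneg hμ _ _)
    _ = π w * kernel G pol μ w w' := by rw [mul_one]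
    _ ≤ π w := pi_mul_kernel_le hμ hμ1 hπ w w'
  have hswap : ∑' w, ∑' w', F (w, w') = ∑' w', ∑' w, F (w, w') :=
    Summable.tsum_comm' (f := fun w' w => F (w, w')) hFsumm.prod_symm hcol hrow
  calc ∑' w, π w * (∑' w', kernel G pol μ w w' * g w')
      = ∑' w, ∑' w', F (w, w') := by
        refine tsum_congr (fun w => ?_)
        rw [← tsum_mul_left]
  _ = ∑' w', ∑' w, F (w, w') := hswap
  _ = ∑' w', (∑' w, π w * kernel G pol μ w w') * g w' := by
        refine tsum_congr (fun w' => ?_)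
        rw [← tsum_mul_right]
        refine tsum_congr (fun w => ?_)
        simp only [hF]
        ring
  _ = ∑' w', π w' * g w' := by
        refine tsum_congr (fun w' => ?_)
        rw [hπ.2.2.2 w']

end Necess

section Necess2

variable {V : Type*} [Fintype V] [DecidableEq V] {G : Multigraph V} {p : ℕ}
  {f : V → Fin p} {μ : V → ℝ} {pol : Policy G} {π : List V → ℝ}

set_option linter.unusedSectionVars false

open MGAux

variable (hAdj : ∀ u v : V, (G.Adj u v ∧ u ≠ v) ↔ f u ≠ f v)

lemma emF_bds (k : Fin p) (m : ℕ) (w : List V) :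
    0 ≤ emF G f k m w ∧ emF G f k m w ≤ 1 := by
  unfold emF; split_ifs <;> norm_num

lemma gmF_bds (k : Fin p) (m : ℕ) (w : List V) :
    0 ≤ gmF G f k m w ∧ gmF G f k m w ≤ 1 := by
  unfold gmF; split_ifs <;> norm_num

include hAdj

/-- the balance equation between consecutive levels. -/
lemma level_balance (hfav : V2Favorable G pol) (hμ : ∀ v, 0 < μ v)
    (hμ1 : ∑ v, μ v = 1) (hπ : IsStationary G (kernel G pol μ) π) (k : Fin p) (m : ℕ) :
    AK G μ f k * ∑' w, π w * emF G f k m w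
      = BK μ f k * ∑' w, π w * emF G f k (m+1) w := by
  have hid := stationary_test hμ hμ1 hπ (gmF G f k (m+1))
    (fun w => (gmF_bds k (m+1) w).1) (fun w => (gmF_bds k (m+1) w).2)
  have hpt : ∀ w, π w * (∑' w', kernel G pol μ w w' * gmF G f k (m+1) w')
      = π w * gmF G f k (m+1) w + AK G μ f k * (π w * emF G f k m w)
        - BK μ f k * (π w * emF G f k (m+1) w) := by
    intro w
    by_cases hw : w ∈ WSpace G
    · rw [master_ind hAdj hfav hμ1 hw m]
      ring
    · rw [hπ.2.1 w hw]
      ring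
  rw [tsum_congr hpt] at hid
  have hs1 : Summable (fun w => π w * gmF G f k (m+1) w) :=
    Summable.of_nonneg_of_le
      (fun w => mul_nonneg (hπ.1 w) (gmF_bds k (m+1) w).1)
      (fun w => by
        calc π w * gmF G f k (m+1) w ≤ π w * 1 :=
            mul_le_mul_of_nonneg_left (gmF_bds k (m+1) w).2 (hπ.1 w)
        _ = π w := mul_one _)
      (pi_summable hπ)
  have hs2 : Summable (fun w => π w * emF G f k m w) :=
    Summable.of_nonneg_of_le
      (fun w => mul_nonneg (hπ.1 w) (emF_bds k m w).1)
      (fun w => by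
        calc π w * emF G f k m w ≤ π w * 1 :=
            mul_le_mul_of_nonneg_left (emF_bds k m w).2 (hπ.1 w)
        _ = π w := mul_one _)
      (pi_summable hπ)
  have hs3 : Summable (fun w => π w * emF G f k (m+1) w) :=
    Summable.of_nonneg_of_le
      (fun w => mul_nonneg (hπ.1 w) (emF_bds k (m+1) w).1)
      (fun w => by
        calc π w * emF G f k (m+1) w ≤ π w * 1 :=
            mul_le_mul_of_nonneg_left (emF_bds k (m+1) w).2 (hπ.1 w)
        _ = π w := mul_one _)
      (pi_summable hπ)
  rw [Summable.tsum_sub (hs1.add ((hs2.mul_left _))) (hs3.mul_left _)] at hid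
  rw [Summable.tsum_add hs1 (hs2.mul_left _)] at hid
  rw [tsum_mul_left, tsum_mul_left] at hid
  linarith

/-- key necessity: positive recurrence forces `AK k < BK k` for every part. -/
lemma AK_lt_BK_of_stationary (hfav : V2Favorable G pol)
    (hsurj : Function.Surjective f) (hp : 2 ≤ p) (hμ : ∀ v, 0 < μ v)
    (hμ1 : ∑ v, μ v = 1) (hπ : IsStationary G (kernel G pol μ) π)
    (hirr : Irreducible G (kernel G pol μ)) (k : Fin p) :
    AK G μ f k < BK μ f k := by
  by_contra hge
  push_neg at hge  -- BK ≤ AK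
  set am : ℕ → ℝ := fun m => ∑' w, π w * emF G f k m w with ham
  have hBpos : 0 < BK μ f k := BK_pos hμ hsurj hp k
  have ham_nonneg : ∀ m, 0 ≤ am m := fun m =>
    tsum_nonneg (fun w => mul_nonneg (hπ.1 w) (emF_bds k m w).1)
  have hrec : ∀ m, AK G μ f k * am m = BK μ f k * am (m+1) :=
    fun m => level_balance hAdj hfav hμ hμ1 hπ k m
  have hs : ∀ m, Summable (fun w => π w * emF G f k m w) := fun m =>
    Summable.of_nonneg_of_le
      (fun w => mul_nonneg (hπ.1 w) (emF_bds k m w).1)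
      (fun w => by
        calc π w * emF G f k m w ≤ π w * 1 :=
            mul_le_mul_of_nonneg_left (emF_bds k m w).2 (hπ.1 w)
        _ = π w := mul_one _)
      (pi_summable hπ)
  have ha0 : π [] ≤ am 0 := by
    have he : emF G f k 0 ([] : List V) = 1 := by
      simp only [emF]
      rw [if_pos ⟨by simp, cnt_nil _⟩]
    calc π [] = π [] * emF G f k 0 [] := by rw [he, mul_one]
    _ ≤ am 0 := Summable.le_tsum (hs 0) []
        (fun w _ => mul_nonneg (hπ.1 w) (emF_bds k 0 w).1)
  have hpos0 : 0 < π [] := pi_pos hμ hμ1 hπ hirr nil_mem_W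
  have hmono : ∀ m, am m ≤ am (m+1) := by
    intro m
    have h1 : BK μ f k * am m ≤ AK G μ f k * am m :=
      mul_le_mul_of_nonneg_right hge (ham_nonneg m)
    rw [hrec m] at h1
    exact le_of_mul_le_mul_left h1 hBpos
  have hlb : ∀ m, π [] ≤ am m := by
    intro m
    induction m with
    | zero => exact ha0
    | succ n ih => exact le_trans ih (hmono n)
  -- but the am's are masses of disjoint sets, summing to at most 1
  have hub : ∀ T : ℕ, ∑ m ∈ Finset.range T, am m ≤ 1 := by
    intro T
    have hswap : ∑ m ∈ Finset.range T, am m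
        = ∑' w, ∑ m ∈ Finset.range T, π w * emF G f k m w := by
      rw [Summable.tsum_finsetSum (fun m _ => hs m)]
    rw [hswap, ← hπ.2.2.1]
    refine Summable.tsum_le_tsum ?_ ?_ (pi_summable hπ)
    · intro w
      have : ∑ m ∈ Finset.range T, π w * emF G f k m w
          = π w * ∑ m ∈ Finset.range T, emF G f k m w := by
        rw [Finset.mul_sum]
      rw [this]
      have hle1 : ∑ m ∈ Finset.range T, emF G f k m w ≤ 1 := by
        by_cases hK : ∀ a ∈ w, f a = k
        · have : ∀ m, emF G f k m w
              = if m = cnt (fun a => f a = k ∧ ¬ G.Adj a a) w then (1:ℝ) else 0 := by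
            intro m
            rw [emF_all hK]
            exact if_congr eq_comm rfl rfl
          rw [Finset.sum_congr rfl (fun m _ => this m)]
          rw [Finset.sum_ite_eq']
          split_ifs <;> norm_num
        · have : ∀ m, emF G f k m w = 0 := by
            intro m
            simp only [emF]
            exact if_neg (fun hc => hK hc.1)
          rw [Finset.sum_congr rfl (fun m _ => this m)]
          simp
      calc π w * ∑ m ∈ Finset.range T, emF G f k m w ≤ π w * 1 :=
          mul_le_mul_of_nonneg_left hle1 (hπ.1 w)
      _ = π w := mul_one _
    · refine summable_of_sum_le (c := ∑ m ∈ Finset.range T, am m) (fun w => ?_) ?_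
      · exact Finset.sum_nonneg fun m _ => mul_nonneg (hπ.1 w) (emF_bds k m w).1
      · intro u
        calc ∑ w ∈ u, ∑ m ∈ Finset.range T, π w * emF G f k m w
            = ∑ m ∈ Finset.range T, ∑ w ∈ u, π w * emF G f k m w :=
              Finset.sum_comm
        _ ≤ ∑ m ∈ Finset.range T, am m := by
              refine Finset.sum_le_sum (fun m _ => ?_)
              exact Summable.sum_le_tsum u
                (fun w _ => mul_nonneg (hπ.1 w) (emF_bds k m w).1) (hs m)
  -- contradiction
  obtain ⟨T, hT⟩ := exists_nat_gt (1 / π [])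
  have h1 : (T : ℝ) * π [] ≤ ∑ m ∈ Finset.range T, am m := by
    have h0 := Finset.sum_le_sum (f := fun _ : ℕ => π []) (g := am)
      (s := Finset.range T) (fun m _ => hlb m)
    simpa using h0
  have h2 : (1 : ℝ) < (T : ℝ) * π [] := by
    rw [div_lt_iff₀ hpos0] at hT
    linarith
  linarith [hub T]

end Necess2

section NcondChar

variable {V : Type*} [Fintype V] [DecidableEq V] {G : Multigraph V} {p : ℕ}
  {f : V → Fin p} {μ : V → ℝ}

set_option linter.unusedSectionVars false

open MGAux

lemma mass_eq_sum (μ : V → ℝ) (S : Set V) :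
    mass μ S = ∑ v ∈ Finset.univ.filter (fun v => v ∈ S), μ v := by
  rw [mass, Finset.sum_filter]
  refine Finset.sum_congr rfl (fun v _ => ?_)
  rw [Set.indicator_apply]

variable (hAdj : ∀ u v : V, (G.Adj u v ∧ u ≠ v) ↔ f u ≠ f v)
include hAdj

lemma indep_subset_part (hμ : ∀ v, 0 < μ v) {I : Set V} (hI : IsIndep G I) :
    ∃ k : Fin p, (∀ i ∈ I, f i = k ∧ ¬ G.Adj i i) ∧ G.nbhd I = {v | f v ≠ k} := by
  obtain ⟨⟨i₀, hi₀⟩, hind⟩ := hI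
  refine ⟨f i₀, ?_, ?_⟩
  · intro i hi
    constructor
    · by_contra hne
      exact hind i hi i₀ hi₀ (adj_of_fne hAdj hne)
    · exact hind i hi i hi
  · ext v
    simp only [nbhd, Set.mem_setOf_eq]
    constructor
    · rintro ⟨u, hu, hadj⟩
      have hnl : ¬ G.Adj u u := hind u hu u hu
      have hne : u ≠ v := by
        rintro rfl
        exact hnl hadj
      have := fne_of_adj hAdj hadj hne
      have hfu : f u = f i₀ := by
        by_contra hne'
        exact hind u hu i₀ hi₀ (adj_of_fne hAdj hne')
      rw [← hfu]
      exact Ne.symm this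
    · intro hne
      exact ⟨i₀, hi₀, adj_of_fne hAdj (Ne.symm hne)⟩

lemma ncond_of_AK_lt_BK (hμ : ∀ v, 0 < μ v)
    (hAB : ∀ k : Fin p, AK G μ f k < BK μ f k) {I : Set V} (hI : IsIndep G I) :
    mass μ I < mass μ (G.nbhd I) := by
  obtain ⟨k, hIk, hnbhd⟩ := indep_subset_part hAdj hμ hI
  have h1 : mass μ I ≤ AK G μ f k := by
    rw [mass_eq_sum, AK]
    refine Finset.sum_le_sum_of_subset_of_nonneg ?_ (fun v _ _ => (hμ v).le)
    intro v hv
    simp only [Finset.mem_filter, Finset.mem_univ, true_and] at *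
    exact hIk v hv
  have h2 : mass μ (G.nbhd I) = BK μ f k := by
    rw [mass_eq_sum, BK]
    congr 1
    ext v
    simp only [Finset.mem_filter, Finset.mem_univ, true_and, hnbhd,
      Set.mem_setOf_eq]
  rw [h2]
  exact lt_of_le_of_lt h1 (hAB k)

lemma AK_lt_BK_of_ncond (hsurj : Function.Surjective f) (hp : 2 ≤ p)
    (hN : Ncond G μ) (k : Fin p) : AK G μ f k < BK μ f k := by
  by_cases hex : ∃ v, f v = k ∧ ¬ G.Adj v v
  · obtain ⟨v₀, hv₀⟩ := hex
    set I : Set V := {v | f v = k ∧ ¬ G.Adj v v} with hIdef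
    have hI : IsIndep G I := by
      refine ⟨⟨v₀, hv₀⟩, ?_⟩
      intro i hi j hj hadj
      rcases eq_or_ne i j with rfl | hne
      · exact hi.2 hadj
      · have := fne_of_adj hAdj hadj hne
        rw [hi.1, hj.1] at this
        exact this rfl
    have h1 : mass μ I = AK G μ f k := by
      rw [mass_eq_sum, AK]
      congr 1
      ext v
      simp only [Finset.mem_filter, Finset.mem_univ, true_and, hIdef,
        Set.mem_setOf_eq]
    have h2 : mass μ (G.nbhd I) = BK μ f k := by
      have hnbhd : G.nbhd I = {v | f v ≠ k} := by
        ext v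
        simp only [nbhd, Set.mem_setOf_eq]
        constructor
        · rintro ⟨u, hu, hadj⟩
          have hne : u ≠ v := by
            rintro rfl
            exact hu.2 hadj
          have := fne_of_adj hAdj hadj hne
          rw [hu.1] at this
          exact Ne.symm this
        · intro hne
          exact ⟨v₀, hv₀, adj_of_fne hAdj (by rw [hv₀.1]; exact Ne.symm hne)⟩
      rw [hnbhd, mass_eq_sum, BK]
      congr 1
      ext v
      simp
    rw [← h1, ← h2]
    exact hN.2 I hI
  · have hA0 : AK G μ f k = 0 := by
      rw [AK]
      rw [Finset.filter_false_of_mem, Finset.sum_empty]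
      intro v _ hv
      exact hex ⟨v, hv⟩
    rw [hA0]
    exact BK_pos hN.1.1 hsurj hp k

end NcondChar

section Occupation

variable {V : Type*} [Fintype V] [DecidableEq V]

set_option linter.unusedSectionVars false

open MGAux

/-- finite set of states reachable in `n` steps from `[]`. -/
noncomputable def Sset : ℕ → Finset (List V)
  | 0 => {([] : List V)}
  | (n+1) => (Sset n).biUnion (fun w => Tfin w)

/-- all lists of length at most `n`. -/
noncomputable def listsLe : ℕ → Finset (List V)
  | 0 => {([] : List V)}
  | (n+1) => {([] : List V)} ∪
      Finset.univ.biUnion (fun v : V => (listsLe n).image (fun l => v :: l))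

lemma mem_listsLe : ∀ (n : ℕ) (l : List V), l.length ≤ n → l ∈ listsLe n := by
  intro n
  induction n with
  | zero =>
    intro l hl
    rw [List.length_eq_zero_iff.1 (Nat.le_zero.1 hl)]
    simp [listsLe]
  | succ n ih =>
    intro l hl
    cases l with
    | nil => simp [listsLe]
    | cons v t =>
      simp only [listsLe, Finset.mem_union, Finset.mem_biUnion]
      right
      exact ⟨v, Finset.mem_univ v, Finset.mem_image.2 ⟨t, ih t (by simpa using hl), rfl⟩⟩

variable {G : Multigraph V} {pol : Policy G} {μ : V → ℝ}

/-- the `n`-step distribution of the chain started at `[]`. -/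
noncomputable def rho (G : Multigraph V) (pol : Policy G) (μ : V → ℝ) :
    ℕ → List V → ℝ
  | 0 => fun w => if w = [] then 1 else 0
  | (n+1) => fun w' => ∑ w ∈ Sset n, rho G pol μ n w * kernel G pol μ w w'

lemma rho_nonneg (hμ : ∀ v, 0 < μ v) : ∀ n w, 0 ≤ rho G pol μ n w := by
  intro n
  induction n with
  | zero =>
    intro w
    simp only [rho]
    split_ifs <;> norm_num
  | succ n ih =>
    intro w'
    simp only [rho]
    exact Finset.sum_nonneg fun w _ => mul_nonneg (ih w) (kernel_nonneg hμ _ _)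

lemma rho_mem (hμ : ∀ v, 0 < μ v) :
    ∀ n w, rho G pol μ n w ≠ 0 → w ∈ Sset n ∧ w ∈ WSpace G := by
  intro n
  induction n with
  | zero =>
    intro w hw
    simp only [rho] at hw
    by_cases h : w = []
    · subst h
      exact ⟨by simp [Sset], nil_mem_W⟩
    · rw [if_neg h] at hw
      exact absurd rfl hw
  | succ n ih =>
    intro w' hw'
    simp only [rho] at hw'
    obtain ⟨w, hwS, hne⟩ := Finset.exists_ne_zero_of_sum_ne_zero hw'
    have hrho : rho G pol μ n w ≠ 0 := fun h => hne (by rw [h, zero_mul])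
    have hker : kernel G pol μ w w' ≠ 0 := fun h => hne (by rw [h, mul_zero])
    obtain ⟨_, hwW⟩ := ih w hrho
    constructor
    · exact Finset.mem_biUnion.2 ⟨w, hwS, kernel_support hμ hwW hker⟩
    · exact kernel_mem_W hμ hwW hker

lemma rho_vanish (hμ : ∀ v, 0 < μ v) {n : ℕ} {w : List V} (h : w ∉ Sset n) :
    rho G pol μ n w = 0 := by
  by_contra hne
  exact h (rho_mem hμ n w hne).1

/-- sum of `rho n` over any superset of `Sset n` -/
lemma rho_sum_superset (hμ : ∀ v, 0 < μ v) {n : ℕ} {A : Finset (List V)}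
    (hA : Sset n ⊆ A) :
    ∑ w ∈ A, rho G pol μ n w = ∑ w ∈ Sset n, rho G pol μ n w :=
  (Finset.sum_subset hA (fun w _ hw => rho_vanish hμ hw)).symm

lemma Tfin_subset_Sset {n : ℕ} {w : List V} (hw : w ∈ Sset n) :
    Tfin w ⊆ Sset (n+1) := by
  intro w' hw'
  exact Finset.mem_biUnion.2 ⟨w, hw, hw'⟩

/-- inner sums over `Sset (n+1)` of kernel-weighted functions reduce to full tsums. -/
lemma kernel_inner_sum (hμ : ∀ v, 0 < μ v) {n : ℕ} {w : List V} (hwS : w ∈ Sset n)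
    (hwW : w ∈ WSpace G) (g : List V → ℝ) :
    ∑ w' ∈ Sset (n+1), kernel G pol μ w w' * g w'
      = ∑' w', kernel G pol μ w w' * g w' := by
  rw [tsum_kernel_mul_eq_sum hμ hwW g]
  refine (Finset.sum_subset (Tfin_subset_Sset hwS) ?_).symm
  intro w' _ hw'
  have : kernel G pol μ w w' = 0 := by
    by_contra h
    exact hw' (kernel_support hμ hwW h)
  rw [this, zero_mul]

lemma rho_total (hμ : ∀ v, 0 < μ v) (hμ1 : ∑ v, μ v = 1) :
    ∀ n, ∑ w ∈ Sset n, rho G pol μ n w = 1 := by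
  intro n
  induction n with
  | zero => simp [rho, Sset]
  | succ n ih =>
    have : ∑ w' ∈ Sset (n+1), rho G pol μ (n+1) w'
        = ∑ w ∈ Sset n, rho G pol μ n w *
            (∑ w' ∈ Sset (n+1), kernel G pol μ w w') := by
      simp only [rho]
      rw [Finset.sum_comm]
      refine Finset.sum_congr rfl (fun w _ => ?_)
      rw [Finset.mul_sum]
    rw [this, ← ih]
    refine Finset.sum_congr rfl (fun w hwS => ?_)
    by_cases hrho : rho G pol μ n w = 0
    · rw [hrho]
      simp

    · have hwW := (rho_mem hμ n w hrho).2
      have := kernel_inner_sum (pol := pol) hμ hwS hwW (fun _ => (1:ℝ))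
      simp only [mul_one] at this
      rw [this, tsum_kernel_one hwW hμ1, mul_one]

lemma rho_le_one (hμ : ∀ v, 0 < μ v) (hμ1 : ∑ v, μ v = 1) (n : ℕ) (w : List V) :
    rho G pol μ n w ≤ 1 := by
  by_cases hS : w ∈ Sset n
  · rw [← rho_total (G := G) (pol := pol) hμ hμ1 n]
    exact Finset.single_le_sum (f := fun w => rho G pol μ n w)
      (fun w' _ => rho_nonneg hμ n w') hS
  · rw [rho_vanish hμ hS]
    norm_num

end Occupation

section Drift

variable {V : Type*} [Fintype V] [DecidableEq V] {G : Multigraph V} {p : ℕ}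
  {f : V → Fin p} {μ : V → ℝ} {pol : Policy G}

set_option linter.unusedSectionVars false

open MGAux

lemma CK_nonneg (hμ : ∀ v, 0 < μ v) (j : Fin p) : 0 ≤ CK G μ f j :=
  Finset.sum_nonneg fun v _ => (hμ v).le

lemma AK_le_one (hμ : ∀ v, 0 < μ v) (hμ1 : ∑ v, μ v = 1) (j : Fin p) :
    AK G μ f j ≤ 1 := by
  have := ABC_sum (G := G) (f := f) hμ1 j
  have h1 := CK_nonneg (G := G) (f := f) hμ j
  have h2 := BK_nonneg (f := f) hμ j
  linarith

lemma mem_F0 {w : List V} (hw : w ∈ WSpace G)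
    (hz : cnt (fun a => ¬ G.Adj a a) w = 0) :
    w ∈ (listsLe (Fintype.card V) : Finset (List V)) := by
  have hloop : ∀ a ∈ w, G.Adj a a := by
    intro a ha
    by_contra h
    exact absurd hz (by
      have : 0 < cnt (fun a => ¬ G.Adj a a) w := (cnt_pos_iff _ _).2 ⟨a, ha, h⟩
      omega)
  have hnodup : w.Nodup := by
    rw [List.nodup_iff_count_le_one]
    intro a
    by_cases ha : a ∈ w
    · exact hw.2 a (hloop a ha)
    · rw [List.count_eq_zero_of_not_mem ha]
      norm_num
  exact mem_listsLe _ w (hnodup.length_le_card)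

variable (hAdj : ∀ u v : V, (G.Adj u v ∧ u ≠ v) ↔ f u ≠ f v)
include hAdj

lemma drift_bound (hfav : V2Favorable G pol) (hμ : ∀ v, 0 < μ v)
    (hμ1 : ∑ v, μ v = 1) {ε : ℝ} (hε1 : 0 < ε)
    (hε2 : ∀ k, ε ≤ BK μ f k - AK G μ f k) {w : List V} (hw : w ∈ WSpace G) :
    ∑' w', kernel G pol μ w w' * (cnt (fun a => ¬ G.Adj a a) w' : ℝ)
      ≤ (cnt (fun a => ¬ G.Adj a a) w : ℝ) - ε
        + (1+ε) * (if cnt (fun a => ¬ G.Adj a a) w = 0 then (1:ℝ) else 0) := by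
  rcases eq_or_ne w [] with rfl | hne
  · rw [master_empty]
    rw [cnt_nil, if_pos rfl]
    have hle : ∑ v, μ v * (cnt (fun a => ¬ G.Adj a a) [v] : ℝ) ≤ ∑ v, μ v := by
      refine Finset.sum_le_sum (fun v _ => ?_)
      have : cnt (fun a => ¬ G.Adj a a) [v] ≤ 1 := by
        rw [cnt_single]
        split_ifs <;> norm_num
      calc μ v * (cnt (fun a => ¬ G.Adj a a) [v] : ℝ) ≤ μ v * 1 := by
            refine mul_le_mul_of_nonneg_left ?_ (hμ v).le
            exact_mod_cast this
      _ = μ v := mul_one _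
    rw [hμ1] at hle
    push_cast
    linarith
  · rcases List.exists_mem_of_ne_nil w hne with ⟨a₀, ha₀⟩
    have hj : ∀ a ∈ w, f a = f a₀ := fun a ha => same_part hAdj hw ha ha₀
    rw [master_drift hAdj hfav hμ1 hw hj hne]
    by_cases hpos : 0 < cnt (fun a => ¬ G.Adj a a) w
    · rw [if_pos hpos, if_neg (by omega)]
      have := hε2 (f a₀)
      linarith
    · rw [if_neg hpos, if_pos (by omega)]
      have := AK_le_one (G := G) (f := f) hμ hμ1 (f a₀)
      linarith

/-- the mean number of visits to the finite set `F₀` grows linearly. -/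
lemma occ_lower (hfav : V2Favorable G pol) (hμ : ∀ v, 0 < μ v)
    (hμ1 : ∑ v, μ v = 1) {ε : ℝ} (hε1 : 0 < ε)
    (hε2 : ∀ k, ε ≤ BK μ f k - AK G μ f k) (N : ℕ) :
    ε * N ≤ (1+ε) * ∑ n ∈ Finset.range N,
      ∑ w ∈ (listsLe (Fintype.card V) : Finset (List V)), rho G pol μ n w := by
  set NL : V → Prop := fun a => ¬ G.Adj a a with hNL
  set x : ℕ → ℝ := fun n => ∑ w ∈ Sset n, rho G pol μ n w * (cnt NL w : ℝ) with hx
  set q : ℕ → ℝ := fun n => ∑ w ∈ Sset n,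
    rho G pol μ n w * (if cnt NL w = 0 then (1:ℝ) else 0) with hq
  set r : ℕ → ℝ := fun n =>
    ∑ w ∈ (listsLe (Fintype.card V) : Finset (List V)), rho G pol μ n w with hr
  have hx0 : x 0 = 0 := by
    simp [hx, Sset, rho, cnt_nil]
  have hxnn : ∀ n, 0 ≤ x n := fun n =>
    Finset.sum_nonneg fun w _ => mul_nonneg (rho_nonneg hμ n w)
      (by positivity)
  have hqr : ∀ n, q n ≤ r n := by
    intro n
    have h1 : q n = ∑ w ∈ (Sset n).filter (fun w => cnt NL w = 0),
        rho G pol μ n w := by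
      rw [hq, Finset.sum_filter]
      refine Finset.sum_congr rfl (fun w _ => ?_)
      split_ifs <;> simp
    rw [h1, hr]
    set A := (Sset n).filter (fun w => cnt NL w = 0) with hA
    have h2 : ∑ w ∈ A, rho G pol μ n w
        = ∑ w ∈ A ∩ (listsLe (Fintype.card V) : Finset (List V)),
            rho G pol μ n w := by
      refine (Finset.sum_subset Finset.inter_subset_left ?_).symm
      intro w hwA hwni
      by_contra hne
      have hwW := (rho_mem hμ n w hne).2
      have hz : cnt NL w = 0 := (Finset.mem_filter.1 hwA).2
      exact hwni (Finset.mem_inter.2 ⟨hwA, mem_F0 hwW hz⟩)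
    rw [h2]
    exact Finset.sum_le_sum_of_subset_of_nonneg Finset.inter_subset_right
      (fun w _ _ => rho_nonneg hμ n w)
  have hstep : ∀ n, x (n+1) ≤ x n - ε + (1+ε) * q n := by
    intro n
    have h1 : x (n+1) = ∑ w ∈ Sset n, rho G pol μ n w *
        (∑ w' ∈ Sset (n+1), kernel G pol μ w w' * (cnt NL w' : ℝ)) := by
      rw [hx]
      simp only [rho]
      calc ∑ w' ∈ Sset (n+1), (∑ w ∈ Sset n, rho G pol μ n w * kernel G pol μ w w')
              * (cnt NL w' : ℝ)
          = ∑ w' ∈ Sset (n+1), ∑ w ∈ Sset n,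
              rho G pol μ n w * kernel G pol μ w w' * (cnt NL w' : ℝ) :=
            Finset.sum_congr rfl (fun w' _ => Finset.sum_mul _ _ _)
      _ = ∑ w ∈ Sset n, ∑ w' ∈ Sset (n+1),
              rho G pol μ n w * kernel G pol μ w w' * (cnt NL w' : ℝ) :=
            Finset.sum_comm
      _ = ∑ w ∈ Sset n, rho G pol μ n w *
              (∑ w' ∈ Sset (n+1), kernel G pol μ w w' * (cnt NL w' : ℝ)) := by
            refine Finset.sum_congr rfl (fun w _ => ?_)
            rw [Finset.mul_sum]
            refine Finset.sum_congr rfl (fun w' _ => ?_)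
            ring
    rw [h1]
    have h2 : ∀ w ∈ Sset n, rho G pol μ n w *
        (∑ w' ∈ Sset (n+1), kernel G pol μ w w' * (cnt NL w' : ℝ))
        ≤ rho G pol μ n w * ((cnt NL w : ℝ) - ε
          + (1+ε) * (if cnt NL w = 0 then (1:ℝ) else 0)) := by
      intro w hwS
      by_cases hrho : rho G pol μ n w = 0
      · rw [hrho, zero_mul, zero_mul]
      · have hwW := (rho_mem hμ n w hrho).2
        refine mul_le_mul_of_nonneg_left ?_ (rho_nonneg hμ n w)
        rw [kernel_inner_sum (pol := pol) hμ hwS hwW]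
        exact drift_bound hAdj hfav hμ hμ1 hε1 hε2 hwW
    calc ∑ w ∈ Sset n, rho G pol μ n w *
        (∑ w' ∈ Sset (n+1), kernel G pol μ w w' * (cnt NL w' : ℝ))
        ≤ ∑ w ∈ Sset n, rho G pol μ n w * ((cnt NL w : ℝ) - ε
          + (1+ε) * (if cnt NL w = 0 then (1:ℝ) else 0)) :=
          Finset.sum_le_sum h2
    _ = x n - ε * (∑ w ∈ Sset n, rho G pol μ n w) + (1+ε) * q n := by
          rw [hx, hq, Finset.mul_sum, Finset.mul_sum, ← Finset.sum_sub_distrib,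
            ← Finset.sum_add_distrib]
          refine Finset.sum_congr rfl (fun w _ => ?_)
          ring
    _ = x n - ε + (1+ε) * q n := by
          rw [rho_total hμ hμ1 n, mul_one]
  have htel : ∀ N, x N ≤ x 0 - ε * N + (1+ε) * ∑ n ∈ Finset.range N, q n := by
    intro N
    induction N with
    | zero => simp
    | succ N ih =>
      have h1 := hstep N
      rw [Finset.sum_range_succ]
      push_cast
      push_cast at ih
      nlinarith [hε1]
  have hsum : ∑ n ∈ Finset.range N, q n ≤ ∑ n ∈ Finset.range N, r n :=
    Finset.sum_le_sum (fun n _ => hqr n)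
  have := htel N
  rw [hx0] at this
  have hxN := hxnn N
  have h1ε : (0:ℝ) < 1 + ε := by linarith
  have : ε * N ≤ (1+ε) * ∑ n ∈ Finset.range N, q n := by linarith
  calc ε * N ≤ (1+ε) * ∑ n ∈ Finset.range N, q n := this
  _ ≤ (1+ε) * ∑ n ∈ Finset.range N, r n :=
      mul_le_mul_of_nonneg_left hsum h1ε.le

end Drift

section Limit

variable {V : Type*} [Fintype V] [DecidableEq V] {G : Multigraph V} {p : ℕ}
  {f : V → Fin p} {μ : V → ℝ} {pol : Policy G}

set_option linter.unusedSectionVars false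
set_option maxHeartbeats 1000000

open MGAux Filter

lemma exists_ulim (U : Ultrafilter ℕ) (u : ℕ → ℝ) (h : ∀ N, u N ∈ Set.Icc (0:ℝ) 1) :
    ∃ L ∈ Set.Icc (0:ℝ) 1, Filter.Tendsto u (U : Filter ℕ) (nhds L) := by
  have hmem : (U.map u : Filter ℝ) ≤ Filter.principal (Set.Icc (0:ℝ) 1) := by
    have hpre : u ⁻¹' (Set.Icc (0:ℝ) 1) = Set.univ := Set.eq_univ_of_forall h
    rw [Filter.le_principal_iff, Ultrafilter.coe_map, Filter.mem_map, hpre]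
    exact Filter.univ_mem
  obtain ⟨L, hL, hle⟩ := isCompact_Icc.ultrafilter_le_nhds (U.map u) hmem
  refine ⟨L, hL, ?_⟩
  rwa [Filter.Tendsto, ← Ultrafilter.coe_map]

lemma rho_finset_le_one (hμ : ∀ v, 0 < μ v) (hμ1 : ∑ v, μ v = 1) (n : ℕ)
    (A : Finset (List V)) : ∑ w ∈ A, rho G pol μ n w ≤ 1 := by
  have h1 : ∑ w ∈ A, rho G pol μ n w = ∑ w ∈ A ∩ Sset n, rho G pol μ n w := by
    refine (Finset.sum_subset Finset.inter_subset_left ?_).symm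
    intro w _ hw
    refine rho_vanish hμ (fun hS => hw (Finset.mem_inter.2 ⟨‹w ∈ A›, hS⟩))
  rw [h1, ← rho_total (G := G) (pol := pol) hμ hμ1 n]
  exact Finset.sum_le_sum_of_subset_of_nonneg Finset.inter_subset_right
    (fun w _ _ => rho_nonneg hμ n w)

variable (hAdj : ∀ u v : V, (G.Adj u v ∧ u ≠ v) ↔ f u ≠ f v)
include hAdj

lemma exists_stationary (hfav : V2Favorable G pol) (hμ : ∀ v, 0 < μ v)
    (hμ1 : ∑ v, μ v = 1) (hp : 2 ≤ p)
    (hAB : ∀ k : Fin p, AK G μ f k < BK μ f k) :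
    ∃ π : List V → ℝ, IsStationary G (kernel G pol μ) π := by
  classical
  -- the uniform drift gap
  have hFinNe : (Finset.univ : Finset (Fin p)).Nonempty :=
    ⟨⟨0, by omega⟩, Finset.mem_univ _⟩
  set ε : ℝ := Finset.univ.inf' hFinNe (fun k => BK μ f k - AK G μ f k) with hεdef
  have hε1 : 0 < ε := by
    rw [hεdef, Finset.lt_inf'_iff]
    exact fun k _ => sub_pos.2 (hAB k)
  have hε2 : ∀ k, ε ≤ BK μ f k - AK G μ f k := by
    intro k
    exact Finset.inf'_le _ (Finset.mem_univ k)
  have h1ε : (0:ℝ) < 1 + ε := by linarith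
  set F₀ : Finset (List V) := listsLe (Fintype.card V) with hF₀
  -- Cesàro averages
  set nuN : ℕ → List V → ℝ :=
    fun N w => (∑ n ∈ Finset.range N, rho G pol μ n w) / N with hnuN
  have hnuN_mem : ∀ N w, nuN N w ∈ Set.Icc (0:ℝ) 1 := by
    intro N w
    constructor
    · exact div_nonneg (Finset.sum_nonneg fun n _ => rho_nonneg hμ n w)
        (Nat.cast_nonneg N)
    · refine div_le_one_of_le₀ ?_ (Nat.cast_nonneg N)
      calc ∑ n ∈ Finset.range N, rho G pol μ n w
          ≤ ∑ n ∈ Finset.range N, 1 :=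
            Finset.sum_le_sum (fun n _ => rho_le_one hμ hμ1 n w)
      _ = N := by simp
  set U : Ultrafilter ℕ := Ultrafilter.of atTop with hU
  have hUle : (U : Filter ℕ) ≤ atTop := Ultrafilter.of_le _
  have hexists : ∀ w, ∃ L ∈ Set.Icc (0:ℝ) 1,
      Filter.Tendsto (fun N => nuN N w) (U : Filter ℕ) (nhds L) :=
    fun w => exists_ulim U (fun N => nuN N w) (fun N => hnuN_mem N w)
  choose ν hνI hνt using hexists
  have hν0 : ∀ w, 0 ≤ ν w := fun w => (hνI w).1
  have hν1 : ∀ w, ν w ≤ 1 := fun w => (hνI w).2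
  -- support
  have hνW : ∀ w ∉ WSpace G, ν w = 0 := by
    intro w hw
    have hz : ∀ N, nuN N w = 0 := by
      intro N
      have : ∀ n, rho G pol μ n w = 0 := by
        intro n
        by_contra h
        exact hw (rho_mem hμ n w h).2
      simp [hnuN, this]
    have : Filter.Tendsto (fun N => nuN N w) (U : Filter ℕ) (nhds 0) := by
      rw [funext hz]
      exact tendsto_const_nhds
    exact tendsto_nhds_unique (hνt w) this
  -- partial sums bounded by 1
  have hνsum_le : ∀ A : Finset (List V), ∑ w ∈ A, ν w ≤ 1 := by
    intro A
    have hlim : Filter.Tendsto (fun N => ∑ w ∈ A, nuN N w) (U : Filter ℕ)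
        (nhds (∑ w ∈ A, ν w)) := tendsto_finset_sum _ (fun w _ => hνt w)
    refine le_of_tendsto hlim (Filter.Eventually.of_forall ?_)
    intro N
    have : ∑ w ∈ A, nuN N w
        = (∑ n ∈ Finset.range N, ∑ w ∈ A, rho G pol μ n w) / N := by
      rw [hnuN, Finset.sum_comm, Finset.sum_div]
    rw [this]
    refine div_le_one_of_le₀ ?_ (Nat.cast_nonneg N)
    calc ∑ n ∈ Finset.range N, ∑ w ∈ A, rho G pol μ n w
        ≤ ∑ n ∈ Finset.range N, 1 :=
          Finset.sum_le_sum (fun n _ => rho_finset_le_one hμ hμ1 n A)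
    _ = N := by simp
  have hνsummable : Summable ν := summable_of_sum_le hν0 hνsum_le
  have hνtsum_le : ∑' w, ν w ≤ 1 := Summable.tsum_le_of_sum_le hνsummable hνsum_le
  -- positive mass on F₀
  have hF₀mass : ε / (1+ε) ≤ ∑ w ∈ F₀, ν w := by
    have hlim : Filter.Tendsto (fun N => ∑ w ∈ F₀, nuN N w) (U : Filter ℕ)
        (nhds (∑ w ∈ F₀, ν w)) := tendsto_finset_sum _ (fun w _ => hνt w)
    refine ge_of_tendsto hlim ?_
    refine Filter.mem_of_superset (hUle (Filter.mem_atTop 1)) ?_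
    intro N hN
    simp only [Set.mem_setOf_eq]
    have hN1 : 1 ≤ N := hN
    have hNpos : (0:ℝ) < N := by exact_mod_cast hN1
    have : ∑ w ∈ F₀, nuN N w
        = (∑ n ∈ Finset.range N, ∑ w ∈ F₀, rho G pol μ n w) / N := by
      rw [hnuN, Finset.sum_comm, Finset.sum_div]
    rw [this]
    rw [div_le_div_iff₀ h1ε hNpos]
    have hocc := occ_lower hAdj hfav hμ hμ1 hε1 hε2 N
    calc ε * (N:ℝ)
        ≤ ((1+ε) * ∑ n ∈ Finset.range N, ∑ w ∈ F₀, rho G pol μ n w) := hocc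
    _ = (∑ n ∈ Finset.range N, ∑ w ∈ F₀, rho G pol μ n w) * (1+ε) := by ring
  set s : ℝ := ∑' w, ν w with hs
  have hspos : 0 < s := by
    have h1 : ε / (1+ε) ≤ s := by
      refine le_trans hF₀mass ?_
      exact Summable.sum_le_tsum F₀ (fun w _ => hν0 w) hνsummable
    have : 0 < ε / (1+ε) := div_pos hε1 h1ε
    linarith
  -- excessivity
  have hexc : ∀ w', ∑' w, ν w * kernel G pol μ w w' ≤ ν w' := by
    intro w'
    have hpt : ∀ w, ν w * kernel G pol μ w w' ≤ ν w := by
      intro w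
      by_cases hw : w ∈ WSpace G
      · calc ν w * kernel G pol μ w w' ≤ ν w * 1 :=
            mul_le_mul_of_nonneg_left (kernel_le_one hμ hμ1 hw w') (hν0 w)
        _ = ν w := mul_one _
      · rw [hνW w hw, zero_mul]
    have hνKsummable : Summable (fun w => ν w * kernel G pol μ w w') :=
      Summable.of_nonneg_of_le
        (fun w => mul_nonneg (hν0 w) (kernel_nonneg hμ _ _)) hpt hνsummable
    refine Summable.tsum_le_of_sum_le hνKsummable ?_
    intro A
    have hper : ∀ N : ℕ, 1 ≤ N → ∑ w ∈ A, nuN N w * kernel G pol μ w w'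
        ≤ nuN N w' + 1 / N := by
      intro N hN
      have hNpos : (0:ℝ) < N := by exact_mod_cast hN
      have hstep : ∀ n, ∑ w ∈ A, rho G pol μ n w * kernel G pol μ w w'
          ≤ rho G pol μ (n+1) w' := by
        intro n
        have h1 : ∑ w ∈ A, rho G pol μ n w * kernel G pol μ w w'
            = ∑ w ∈ A ∩ Sset n, rho G pol μ n w * kernel G pol μ w w' := by
          refine (Finset.sum_subset Finset.inter_subset_left ?_).symm
          intro w hwA hw
          rw [rho_vanish hμ (fun hS => hw (Finset.mem_inter.2 ⟨hwA, hS⟩)),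
            zero_mul]
        rw [h1]
        show _ ≤ ∑ w ∈ Sset n, rho G pol μ n w * kernel G pol μ w w'
        refine Finset.sum_le_sum_of_subset_of_nonneg Finset.inter_subset_right ?_
        intro w _ _
        exact mul_nonneg (rho_nonneg hμ n w) (kernel_nonneg hμ _ _)
      have h2 : ∑ w ∈ A, nuN N w * kernel G pol μ w w'
          = (∑ n ∈ Finset.range N,
              ∑ w ∈ A, rho G pol μ n w * kernel G pol μ w w') / N := by
        rw [Finset.sum_comm, Finset.sum_div]
        refine Finset.sum_congr rfl (fun w _ => ?_)
        rw [hnuN]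
        rw [div_mul_eq_mul_div, Finset.sum_mul]
      rw [h2]
      have h3 : ∑ n ∈ Finset.range N,
          ∑ w ∈ A, rho G pol μ n w * kernel G pol μ w w'
          ≤ ∑ n ∈ Finset.range N, rho G pol μ (n+1) w' :=
        Finset.sum_le_sum (fun n _ => hstep n)
      have h4 : ∑ n ∈ Finset.range N, rho G pol μ (n+1) w'
          ≤ (∑ n ∈ Finset.range N, rho G pol μ n w') + 1 := by
        have h5 : ∑ n ∈ Finset.range (N+1), rho G pol μ n w'
            = (∑ n ∈ Finset.range N, rho G pol μ (n+1) w') + rho G pol μ 0 w' :=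
          Finset.sum_range_succ' _ N
        have h6 : ∑ n ∈ Finset.range (N+1), rho G pol μ n w'
            = (∑ n ∈ Finset.range N, rho G pol μ n w') + rho G pol μ N w' :=
          Finset.sum_range_succ _ N
        have h7 : rho G pol μ N w' ≤ 1 := rho_le_one hμ hμ1 N w'
        have h8 : 0 ≤ rho G pol μ 0 w' := rho_nonneg hμ 0 w'
        linarith
      calc (∑ n ∈ Finset.range N,
            ∑ w ∈ A, rho G pol μ n w * kernel G pol μ w w') / N
          ≤ ((∑ n ∈ Finset.range N, rho G pol μ n w') + 1) / N := by
            gcongr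
            linarith
      _ = nuN N w' + 1 / N := by
            rw [hnuN, add_div]
    have hlimL : Filter.Tendsto
        (fun N => ∑ w ∈ A, nuN N w * kernel G pol μ w w') (U : Filter ℕ)
        (nhds (∑ w ∈ A, ν w * kernel G pol μ w w')) :=
      tendsto_finset_sum _ (fun w _ => (hνt w).mul_const _)
    have hlimR : Filter.Tendsto (fun N => nuN N w' + 1 / (N:ℝ)) (U : Filter ℕ)
        (nhds (ν w')) := by
      have := (hνt w').add (tendsto_one_div_atTop_nhds_zero_nat.mono_left hUle)
      simpa using this
    refine le_of_tendsto_of_tendsto' hlimL hlimR ?_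
    intro N
    rcases Nat.eq_zero_or_pos N with rfl | hN
    · simp [hnuN]
    · exact hper N hN
  -- row sums equal ν
  have hrow_eq : ∀ w, ∑' w', ν w * kernel G pol μ w w' = ν w := by
    intro w
    by_cases hw : w ∈ WSpace G
    · rw [tsum_mul_left, tsum_kernel_one hw hμ1, mul_one]
    · rw [hνW w hw]
      simp
  set F : List V × List V → ℝ := fun q => ν q.1 * kernel G pol μ q.1 q.2 with hFdef
  have hF0 : 0 ≤ F := fun q => mul_nonneg (hν0 _) (kernel_nonneg hμ _ _)
  have hrowS : ∀ w, Summable fun w' => F (w, w') := by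
    intro w
    by_cases hw : w ∈ WSpace G
    · exact (kernel_summable (pol := pol) hμ1 hw).mul_left (ν w)
    · refine (summable_congr (fun w' => ?_)).1 summable_zero
      simp [hFdef, hνW w hw]
  have hinnerS : Summable fun w => ∑' w', F (w, w') :=
    (summable_congr (fun w => (hrow_eq w).symm)).1 hνsummable
  have hFsum : Summable F := (summable_prod_of_nonneg hF0).2 ⟨hrowS, hinnerS⟩
  have hcolS : ∀ w', Summable fun w => F (w, w') := by
    intro w'
    refine Summable.of_nonneg_of_le (fun w => hF0 (w, w')) ?_ hνsummable
    intro w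
    by_cases hw : w ∈ WSpace G
    · calc ν w * kernel G pol μ w w' ≤ ν w * 1 :=
          mul_le_mul_of_nonneg_left (kernel_le_one hμ hμ1 hw w') (hν0 w)
      _ = ν w := mul_one _
    · simp [hFdef, hνW w hw, hν0 w]
  have hswap : ∑' w, ∑' w', F (w, w') = ∑' w', ∑' w, F (w, w') :=
    Summable.tsum_comm' (f := fun w' w => F (w, w')) hFsum.prod_symm hcolS hrowS
  have hcolsumS : Summable fun w' => ∑' w, F (w, w') := by
    have h1 : Summable fun q : List V × List V => F q.swap := hFsum.prod_symm
    have h2 := (summable_prod_of_nonneg (fun q => hF0 q.swap)).1 h1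
    exact h2.2
  have htot : ∑' w', ∑' w, F (w, w') = s := by
    rw [← hswap]
    rw [tsum_congr (fun w => hrow_eq w)]
  have hinv : ∀ w', ∑' w, ν w * kernel G pol μ w w' = ν w' := by
    have hd0 : ∀ w', 0 ≤ ν w' - ∑' w, F (w, w') := fun w' => sub_nonneg.2 (hexc w')
    have hdsum : Summable fun w' => ν w' - ∑' w, F (w, w') :=
      hνsummable.sub hcolsumS
    have htsumd : ∑' w', (ν w' - ∑' w, F (w, w')) = 0 := by
      rw [Summable.tsum_sub hνsummable hcolsumS, htot]
      exact sub_eq_zero.2 hs.symm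
    intro w'
    have hle : ν w' - ∑' w, F (w, w') ≤ 0 := by
      rw [← htsumd]
      exact Summable.le_tsum hdsum w' (fun w'' _ => hd0 w'')
    have := le_antisymm hle (hd0 w')
    linarith [this]
  -- the stationary distribution
  refine ⟨fun w => ν w * s⁻¹, ?_, ?_, ?_, ?_⟩
  · intro w
    exact mul_nonneg (hν0 w) (inv_nonneg.2 hspos.le)
  · intro w hw
    show ν w * s⁻¹ = 0
    rw [hνW w hw, zero_mul]
  · rw [tsum_mul_right, ← hs]
    field_simp
  · intro w'
    have hpt : ∀ w, (ν w * s⁻¹) * kernel G pol μ w w'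
        = (ν w * kernel G pol μ w w') * s⁻¹ := fun w => by ring
    rw [tsum_congr hpt, tsum_mul_right, hinv w']

end Limit
open Multigraph
/-- Let `G` be a complete `p`-partite multigraph with `p ≥ 2`, and
suppose `p ≥ 3` or `V₁ ≠ ∅`. Then every `V₂`-favorable admissible matching policy is
maximal: `stab(G,Φ) = Ncond(G)`. -/
theorem v2favorable_maximal {V : Type*} [Fintype V] [DecidableEq V] (G : Multigraph V)
    (p : ℕ) (hp : 2 ≤ p) (hpart : CompletePPartite G p)
    (hcase : 3 ≤ p ∨ ∃ v : V, G.Adj v v)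
    (pol : Policy G) (hfav : V2Favorable G pol) :
    ∀ μ : V → ℝ,
      (FullSupport μ ∧ PositiveRecurrent G (kernel G pol μ)) ↔ Ncond G μ := by
  obtain ⟨f, hsurj, hAdjc⟩ := hpart
  have hAdj : ∀ u v : V, (G.Adj u v ∧ u ≠ v) ↔ f u ≠ f v := hAdjc
  intro μ
  constructor
  · rintro ⟨hfs, hirr, π, hπ⟩
    refine ⟨hfs, fun I hI => ?_⟩
    refine ncond_of_AK_lt_BK hAdj hfs.1 (fun k => ?_) hI
    exact AK_lt_BK_of_stationary hAdj hfav hsurj hp hfs.1 hfs.2 hπ hirr k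
  · intro hN
    refine ⟨hN.1, ?_, ?_⟩
    · exact irreducible_kernel hAdj hN.1.1 hsurj hp
    · exact exists_stationary hAdj hfav hN.1.1 hN.1.2 hp
        (fun k => AK_lt_BK_of_ncond hAdj hsurj hp hN k)
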